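/- arXiv:2207.06536 — 4 statements merged into one kernel-verified Lean document; each statement's English description precedes it below -/
import Mathlib

section
/- Let L : H₁ → H₂ be a linear map between inner product spaces and let ψ₁, ψ₂ be vectors such that for each ψ ∈ {ψ₁, ψ₂, ψ₁+ψ₂, ψ₁−ψ₂, ψ₁+i·ψ₂, ψ₁−i·ψ₂} with ψ ≠ 0 we have (1−ε)·‖ψ‖ ≤ ‖L ψ‖ ≤ (1+ε)·‖ψ‖ for some 0 ≤ ε ≤ 1. Then |⟨ψ₂, L†L ψ₁⟩ − ⟨ψ₂, ψ₁⟩| ≤ √18 · ε. -/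

private lemma overnorm_aux (a n ε : ℝ) (hn : 0 ≤ n) (ha : 0 ≤ a)
    (hε0 : 0 ≤ ε) (hε1 : ε ≤ 1)
    (h1 : (1 - ε) * n ≤ a) (h2 : a ≤ (1 + ε) * n) :
    |a ^ 2 - n ^ 2| ≤ 3 * ε * n ^ 2 := by
  rw [abs_le]
  constructor <;> nlinarith [mul_nonneg hε0 (mul_nonneg hε0 (mul_self_nonneg n)),
    mul_nonneg (mul_nonneg hε0 hn) hn, sq_nonneg n]

set_option maxHeartbeats 1000000 in
/-- Lemma "overnorm": if a linear map `L` approximately preserves (to relative accuracy `ε`)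
the norms of the six states `ψ₁, ψ₂, ψ₁ ± ψ₂, ψ₁ ± i·ψ₂`, then it preserves the inner
product of the states `ψ₁`, `ψ₂` up to error `√18 · ε`. -/
theorem overlap_from_norms {H₁ H₂ : Type*}
    [NormedAddCommGroup H₁] [InnerProductSpace ℂ H₁]
    [NormedAddCommGroup H₂] [InnerProductSpace ℂ H₂]
    (L : H₁ →ₗ[ℂ] H₂) (ψ₁ ψ₂ : H₁) (hψ₁ : ‖ψ₁‖ = 1) (hψ₂ : ‖ψ₂‖ = 1)
    (ε : ℝ) (hε0 : 0 ≤ ε) (hε1 : ε ≤ 1)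
    (hL : ∀ ψ ∈ ({ψ₁, ψ₂, ψ₁ + ψ₂, ψ₁ - ψ₂,
        ψ₁ + Complex.I • ψ₂, ψ₁ - Complex.I • ψ₂} : Set H₁), ψ ≠ 0 →
      (1 - ε) * ‖ψ‖ ≤ ‖L ψ‖ ∧ ‖L ψ‖ ≤ (1 + ε) * ‖ψ‖) :
    ‖(inner ℂ (L ψ₂) (L ψ₁) : ℂ) - (inner ℂ ψ₂ ψ₁ : ℂ)‖ ≤ Real.sqrt 18 * ε := by
  -- deviation of squared norms
  have key : ∀ ψ ∈ ({ψ₁, ψ₂, ψ₁ + ψ₂, ψ₁ - ψ₂,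
      ψ₁ + Complex.I • ψ₂, ψ₁ - Complex.I • ψ₂} : Set H₁),
      |‖L ψ‖^2 - ‖ψ‖^2| ≤ 3 * ε * ‖ψ‖^2 := by
    intro ψ hψ
    by_cases h0 : ψ = 0
    · simp [h0, mul_nonneg, hε0]
    · obtain ⟨h1, h2⟩ := hL ψ hψ h0
      exact overnorm_aux (‖L ψ‖) (‖ψ‖) ε (norm_nonneg ψ) (norm_nonneg (L ψ)) hε0 hε1 h1 h2
  have dp := key (ψ₁ + ψ₂) (by simp)
  have dm := key (ψ₁ - ψ₂) (by simp)
  have dip := key (ψ₁ + Complex.I • ψ₂) (by simp)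
  have dim := key (ψ₁ - Complex.I • ψ₂) (by simp)
  -- norm expansions
  have e1 : ‖ψ₁ + ψ₂‖^2 = ‖ψ₁‖^2 + 2 * (inner ℂ ψ₁ ψ₂ : ℂ).re + ‖ψ₂‖^2 := by
    simpa using @norm_add_sq ℂ _ _ _ _ ψ₁ ψ₂
  have e2 : ‖ψ₁ - ψ₂‖^2 = ‖ψ₁‖^2 - 2 * (inner ℂ ψ₁ ψ₂ : ℂ).re + ‖ψ₂‖^2 := by
    simpa using @norm_sub_sq ℂ _ _ _ _ ψ₁ ψ₂
  have f1 : ‖L ψ₁ + L ψ₂‖^2 = ‖L ψ₁‖^2 + 2 * (inner ℂ (L ψ₁) (L ψ₂) : ℂ).re + ‖L ψ₂‖^2 := by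
    simpa using @norm_add_sq ℂ _ _ _ _ (L ψ₁) (L ψ₂)
  have f2 : ‖L ψ₁ - L ψ₂‖^2 = ‖L ψ₁‖^2 - 2 * (inner ℂ (L ψ₁) (L ψ₂) : ℂ).re + ‖L ψ₂‖^2 := by
    simpa using @norm_sub_sq ℂ _ _ _ _ (L ψ₁) (L ψ₂)
  have hiψ : ‖Complex.I • ψ₂‖ = ‖ψ₂‖ := by simp [norm_smul]
  have hiLψ : ‖Complex.I • L ψ₂‖ = ‖L ψ₂‖ := by simp [norm_smul]
  have hsm : (inner ℂ ψ₁ (Complex.I • ψ₂) : ℂ).re = -(inner ℂ ψ₁ ψ₂ : ℂ).im := by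
    rw [inner_smul_right]; simp
  have hsmL : (inner ℂ (L ψ₁) (Complex.I • L ψ₂) : ℂ).re = -(inner ℂ (L ψ₁) (L ψ₂) : ℂ).im := by
    rw [inner_smul_right]; simp
  have e3 : ‖ψ₁ + Complex.I • ψ₂‖^2 = ‖ψ₁‖^2 - 2 * (inner ℂ ψ₁ ψ₂ : ℂ).im + ‖ψ₂‖^2 := by
    have := @norm_add_sq ℂ _ _ _ _ ψ₁ (Complex.I • ψ₂)
    simp only [RCLike.re_to_complex] at this
    rw [this, hsm, hiψ]; ring
  have e4 : ‖ψ₁ - Complex.I • ψ₂‖^2 = ‖ψ₁‖^2 + 2 * (inner ℂ ψ₁ ψ₂ : ℂ).im + ‖ψ₂‖^2 := by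
    have := @norm_sub_sq ℂ _ _ _ _ ψ₁ (Complex.I • ψ₂)
    simp only [RCLike.re_to_complex] at this
    rw [this, hsm, hiψ]; ring
  have f3 : ‖L ψ₁ + Complex.I • L ψ₂‖^2
      = ‖L ψ₁‖^2 - 2 * (inner ℂ (L ψ₁) (L ψ₂) : ℂ).im + ‖L ψ₂‖^2 := by
    have := @norm_add_sq ℂ _ _ _ _ (L ψ₁) (Complex.I • L ψ₂)
    simp only [RCLike.re_to_complex] at this
    rw [this, hsmL, hiLψ]; ring
  have f4 : ‖L ψ₁ - Complex.I • L ψ₂‖^2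
      = ‖L ψ₁‖^2 + 2 * (inner ℂ (L ψ₁) (L ψ₂) : ℂ).im + ‖L ψ₂‖^2 := by
    have := @norm_sub_sq ℂ _ _ _ _ (L ψ₁) (Complex.I • L ψ₂)
    simp only [RCLike.re_to_complex] at this
    rw [this, hsmL, hiLψ]; ring
  -- rewrite L of combinations
  have madd : L (ψ₁ + ψ₂) = L ψ₁ + L ψ₂ := map_add L ψ₁ ψ₂
  have msub : L (ψ₁ - ψ₂) = L ψ₁ - L ψ₂ := map_sub L ψ₁ ψ₂
  have miadd : L (ψ₁ + Complex.I • ψ₂) = L ψ₁ + Complex.I • L ψ₂ := by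
    simp [map_add, map_smul]
  have misub : L (ψ₁ - Complex.I • ψ₂) = L ψ₁ - Complex.I • L ψ₂ := by
    simp [map_sub, map_smul]
  rw [madd] at dp; rw [msub] at dm; rw [miadd] at dip; rw [misub] at dim
  -- bounds on the pure states
  have d1 := key ψ₁ (by simp)
  have d2 := key ψ₂ (by simp)
  -- swap order of inner products
  have hswap : (inner ℂ ψ₂ ψ₁ : ℂ) = starRingEnd ℂ (inner ℂ ψ₁ ψ₂ : ℂ) :=
    (inner_conj_symm ψ₂ ψ₁).symm
  have hswapL : (inner ℂ (L ψ₂) (L ψ₁) : ℂ) = starRingEnd ℂ (inner ℂ (L ψ₁) (L ψ₂) : ℂ) :=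
    (inner_conj_symm (L ψ₂) (L ψ₁)).symm
  set z : ℂ := (inner ℂ (L ψ₂) (L ψ₁) : ℂ) - (inner ℂ ψ₂ ψ₁ : ℂ) with hzdef
  have hzre : z.re = (inner ℂ (L ψ₁) (L ψ₂) : ℂ).re - (inner ℂ ψ₁ ψ₂ : ℂ).re := by
    rw [hzdef, hswap, hswapL]
    simp only [Complex.sub_re, Complex.conj_re]
  have hzim : z.im = -(inner ℂ (L ψ₁) (L ψ₂) : ℂ).im + (inner ℂ ψ₁ ψ₂ : ℂ).im := by
    rw [hzdef, hswap, hswapL]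
    simp only [Complex.sub_im, Complex.conj_im]
    ring
  -- parallelogram laws
  have p1 : ‖ψ₁ + ψ₂‖^2 + ‖ψ₁ - ψ₂‖^2 = 4 := by
    rw [e1, e2, hψ₁, hψ₂]; ring
  have p2 : ‖ψ₁ + Complex.I • ψ₂‖^2 + ‖ψ₁ - Complex.I • ψ₂‖^2 = 4 := by
    rw [e3, e4, hψ₁, hψ₂]; ring
  -- real and imaginary part bounds
  have hre : |z.re| ≤ 3 * ε := by
    rw [abs_le] at dp dm ⊢
    have hq : 3 * ε * ‖ψ₁ + ψ₂‖^2 + 3 * ε * ‖ψ₁ - ψ₂‖^2 = 12 * ε := by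
      linear_combination (3 * ε) * p1
    constructor <;> (rw [hzre]; linarith [dp.1, dp.2, dm.1, dm.2, e1, e2, f1, f2, hq])
  have him : |z.im| ≤ 3 * ε := by
    rw [abs_le] at dip dim ⊢
    have hq : 3 * ε * ‖ψ₁ + Complex.I • ψ₂‖^2 + 3 * ε * ‖ψ₁ - Complex.I • ψ₂‖^2 = 12 * ε := by
      linear_combination (3 * ε) * p2
    constructor <;> (rw [hzim]; linarith [dip.1, dip.2, dim.1, dim.2, e3, e4, f3, f4, hq])
  -- conclude
  have habs : ‖z‖ = Real.sqrt (z.re^2 + z.im^2) := by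
    rw [Complex.norm_def, Complex.normSq_apply]; ring_nf
  rw [habs]
  have h18 : Real.sqrt 18 * ε = Real.sqrt (18 * ε^2) := by
    rw [Real.sqrt_mul (by norm_num), Real.sqrt_sq hε0]
  rw [h18]
  apply Real.sqrt_le_sqrt
  have hb1 : z.re ^ 2 ≤ (3 * ε) ^ 2 := by
    rw [← sq_abs]
    exact pow_le_pow_left₀ (abs_nonneg _) hre 2
  have hb2 : z.im ^ 2 ≤ (3 * ε) ^ 2 := by
    rw [← sq_abs]
    exact pow_le_pow_left₀ (abs_nonneg _) him 2
  calc z.re ^ 2 + z.im ^ 2 ≤ (3 * ε) ^ 2 + (3 * ε) ^ 2 := add_le_add hb1 hb2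
    _ = 18 * ε ^ 2 := by ring
end

section
/- Let (X, d, μ) be a metric probability space satisfying a logarithmic Sobolev inequality with constant C > 0, i.e. E[f² log(f²/E[f²])] ≤ 2C·E[|∇f|²] for all locally Lipschitz f, where |∇f|(x) = limsup_{y→x} |f(y)−f(x)|/d(x,y). Then every κ-Lipschitz F : X → ℝ with E[F] < ∞ satisfies Pr[F ≥ E[F] + ε] ≤ exp(−ε²/(2Cκ²)). -/
open MeasureTheory Filter
open scoped NNReal ENNReal

/-- The local gradient modulus `|∇f|(x) = limsup_{y→x} |f(y)−f(x)|/d(x,y)`. -/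
noncomputable def gradNorm {X : Type*} [MetricSpace X] (f : X → ℝ) (x : X) : ℝ :=
  Filter.limsup (fun y => |f y - f x| / dist y x) (nhdsWithin x {x}ᶜ)

lemma abs_exp_sub_one_le' (t : ℝ) : |Real.exp t - 1| ≤ |t| * Real.exp |t| := by
  have key : Real.exp t * Real.exp (-t) = 1 := by rw [← Real.exp_add]; simp
  rcases le_or_gt 0 t with h | h
  · rw [abs_of_nonneg h, abs_of_nonneg (by nlinarith [Real.one_le_exp h] : (0:ℝ) ≤ Real.exp t - 1)]
    nlinarith [Real.add_one_le_exp (-t), Real.exp_pos t]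
  · rw [abs_of_neg h, abs_of_nonpos (by simp [Real.exp_le_one_iff.mpr h.le] : Real.exp t - 1 ≤ 0)]
    have h1 : 1 - Real.exp t ≤ -t := by nlinarith [Real.add_one_le_exp t]
    nlinarith [Real.exp_pos (-t), Real.one_le_exp (le_of_lt (neg_pos.mpr h)), h1]

lemma gradNorm_bounds {X : Type*} [MetricSpace X] {f : X → ℝ} {x : X} {b : ℝ} (hb : 0 ≤ b)
    (h : ∀ δ : ℝ, 0 < δ → ∀ᶠ y in nhdsWithin x {x}ᶜ, |f y - f x| / dist y x ≤ b + δ) :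
    0 ≤ gradNorm f x ∧ gradNorm f x ≤ b := by
  set l := nhdsWithin x {x}ᶜ with hl
  rcases l.eq_or_neBot with hbot | hne
  · have : gradNorm f x = 0 := by
      have huniv : {a : ℝ | ∀ᶠ n in Filter.map (fun y => |f y - f x| / dist y x) l, n ≤ a}
          = Set.univ := by
        ext a; simp [hbot]
      simp only [gradNorm, Filter.limsup, Filter.limsSup, ← hl, huniv]
      exact Real.sInf_of_not_bddBelow (fun hbd => by
        obtain ⟨c, hc⟩ := hbd
        exact absurd (hc (Set.mem_univ (c - 1))) (by linarith))
    exact ⟨this.ge, by rw [this]; exact hb⟩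
  · have hnonneg : ∀ y, 0 ≤ |f y - f x| / dist y x := fun y => by positivity
    have hbdd : Filter.IsBoundedUnder (· ≤ ·) l (fun y => |f y - f x| / dist y x) :=
      Filter.isBoundedUnder_of_eventually_le ((h 1 one_pos).mono fun y hy => hy)
    constructor
    · exact Filter.le_limsup_of_frequently_le
        ((Filter.Eventually.of_forall hnonneg).frequently) hbdd
    · have hcb : Filter.IsCoboundedUnder (· ≤ ·) l (fun y => |f y - f x| / dist y x) :=
        Filter.IsCoboundedUnder.of_frequently_ge
          ((Filter.Eventually.of_forall hnonneg).frequently)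
      exact le_of_forall_pos_le_add fun δ hδ => Filter.limsup_le_of_le hcb (h δ hδ)

lemma gradNorm_exp_bounds {X : Type*} [MetricSpace X] {g : X → ℝ} {κ : ℝ≥0}
    (hg : LipschitzWith κ g) {a : ℝ} (ha : 0 ≤ a) (x : X) :
    0 ≤ gradNorm (fun y => Real.exp (a * g y)) x ∧
      gradNorm (fun y => Real.exp (a * g y)) x ≤ a * κ * Real.exp (a * g x) := by
  have hb : (0:ℝ) ≤ a * κ * Real.exp (a * g x) := by positivity
  refine gradNorm_bounds hb fun δ hδ => ?_
  set b := a * (κ:ℝ) * Real.exp (a * g x) with hbdef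
  have htend : Filter.Tendsto (fun y => b * Real.exp (a * κ * dist y x))
      (nhdsWithin x {x}ᶜ) (nhds (b * Real.exp (a * κ * dist x x))) := by
    apply Filter.Tendsto.mono_left ?_ nhdsWithin_le_nhds
    exact (Continuous.tendsto (by continuity) x)
  rw [dist_self, mul_zero, Real.exp_zero, mul_one] at htend
  have hev : ∀ᶠ y in nhdsWithin x {x}ᶜ, b * Real.exp (a * κ * dist y x) < b + δ :=
    htend.eventually_lt_const (by linarith)
  filter_upwards [hev, self_mem_nhdsWithin] with y hy hymem
  have hyne : y ≠ x := hymem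
  have hd : 0 < dist y x := dist_pos.mpr hyne
  have htabs : |a * g y - a * g x| ≤ a * κ * dist y x := by
    rw [← mul_sub, abs_mul, abs_of_nonneg ha, mul_assoc]
    refine mul_le_mul_of_nonneg_left ?_ ha
    have := hg.dist_le_mul y x
    rwa [Real.dist_eq] at this
  have hsplit : Real.exp (a * g y) - Real.exp (a * g x)
      = Real.exp (a * g x) * (Real.exp (a * g y - a * g x) - 1) := by
    rw [mul_sub, mul_one, ← Real.exp_add]; ring_nf
  have key : |Real.exp (a * g y) - Real.exp (a * g x)|
      ≤ Real.exp (a * g x) * (|a * g y - a * g x| * Real.exp |a * g y - a * g x|) := by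
    rw [hsplit, abs_mul, abs_of_pos (Real.exp_pos _)]
    exact mul_le_mul_of_nonneg_left (abs_exp_sub_one_le' _) (Real.exp_pos _).le
  have key2 : |Real.exp (a * g y) - Real.exp (a * g x)|
      ≤ (b * Real.exp (a * κ * dist y x)) * dist y x := by
    refine key.trans ?_
    have h1 : |a * g y - a * g x| * Real.exp |a * g y - a * g x|
        ≤ (a * κ * dist y x) * Real.exp (a * κ * dist y x) := by
      refine mul_le_mul htabs (Real.exp_le_exp.mpr htabs) (Real.exp_pos _).le ?_
      positivity
    calc Real.exp (a * g x) * (|a * g y - a * g x| * Real.exp |a * g y - a * g x|)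
        ≤ Real.exp (a * g x) * ((a * κ * dist y x) * Real.exp (a * κ * dist y x)) :=
          mul_le_mul_of_nonneg_left h1 (Real.exp_pos _).le
      _ = (b * Real.exp (a * κ * dist y x)) * dist y x := by rw [hbdef]; ring
  calc |Real.exp (a * g y) - Real.exp (a * g x)| / dist y x
      ≤ b * Real.exp (a * κ * dist y x) := by
        rw [div_le_iff₀ hd]; exact key2
    _ ≤ b + δ := hy.le

section Core
variable {X : Type*} [MetricSpace X] [MeasurableSpace X] [BorelSpace X]
  (μ : Measure X) [IsProbabilityMeasure μ]

lemma int_of_bdd {h : X → ℝ} (hc : Continuous h) {B : ℝ} (hB : ∀ x, |h x| ≤ B) :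
    Integrable h μ :=
  (integrable_const B).mono' hc.aestronglyMeasurable
    (Eventually.of_forall fun x => by simpa [Real.norm_eq_abs] using hB x)

variable {C : ℝ} (hC : 0 < C) {κ : ℝ≥0} {g : X → ℝ} (hg : LipschitzWith κ g)
  {M : ℝ} (hM0 : 0 ≤ M) (hM : ∀ x, |g x| ≤ M)

set_option linter.unusedSectionVars false
include hg hM0 hM

/-- integrability of `exp (t * g)` -/
lemma exp_tg_int (t : ℝ) : Integrable (fun x => Real.exp (t * g x)) μ := by
  refine int_of_bdd μ (Real.continuous_exp.comp (continuous_const.mul hg.continuous))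
    (B := Real.exp (|t| * M)) fun x => ?_
  rw [abs_of_pos (Real.exp_pos _), Real.exp_le_exp]
  calc t * g x ≤ |t * g x| := le_abs_self _
    _ = |t| * |g x| := abs_mul _ _
    _ ≤ |t| * M := by
        exact mul_le_mul_of_nonneg_left (hM x) (abs_nonneg t)

lemma g_exp_tg_int (t : ℝ) : Integrable (fun x => g x * Real.exp (t * g x)) μ := by
  refine int_of_bdd μ (hg.continuous.mul (Real.continuous_exp.comp (continuous_const.mul hg.continuous))) (B := M * Real.exp (|t| * M)) fun x => ?_
  rw [abs_mul, abs_of_pos (Real.exp_pos _)]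
  refine mul_le_mul (hM x) ?_ (Real.exp_pos _).le hM0
  rw [Real.exp_le_exp]
  calc t * g x ≤ |t * g x| := le_abs_self _
    _ = |t| * |g x| := abs_mul _ _
    _ ≤ |t| * M := mul_le_mul_of_nonneg_left (hM x) (abs_nonneg t)

lemma H_pos (t : ℝ) : 0 < ∫ x, Real.exp (t * g x) ∂μ := by
  have h1 : Real.exp (-(|t| * M)) = ∫ _x, Real.exp (-(|t| * M)) ∂μ := by
    simp [integral_const]
  have h2 : Real.exp (-(|t| * M)) ≤ ∫ x, Real.exp (t * g x) ∂μ := by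
    rw [h1]
    refine integral_mono (integrable_const _) (exp_tg_int μ hg hM0 hM t) fun x => ?_
    rw [Real.exp_le_exp]
    have : |t * g x| ≤ |t| * M := by
      rw [abs_mul]; exact mul_le_mul_of_nonneg_left (hM x) (abs_nonneg t)
    have := abs_le.mp this
    linarith [this.1]
  exact lt_of_lt_of_le (Real.exp_pos _) h2

lemma H_hasDeriv (t₀ : ℝ) :
    HasDerivAt (fun t => ∫ x, Real.exp (t * g x) ∂μ)
      (∫ x, g x * Real.exp (t₀ * g x) ∂μ) t₀ := by
  have key := hasDerivAt_integral_of_dominated_loc_of_lip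
    (F := fun t x => Real.exp (t * g x))
    (F' := fun x => g x * Real.exp (t₀ * g x)) (μ := μ) (x₀ := t₀)
    (bound := fun _ => M * Real.exp ((|t₀| + 1) * M) * Real.exp (2 * M))
    (Metric.ball_mem_nhds t₀ one_pos) ?_ ?_ ?_ ?_ ?_ ?_
  · exact key.2
  · exact Eventually.of_forall fun t =>
      (Real.continuous_exp.comp (continuous_const.mul hg.continuous)).aestronglyMeasurable
  · exact exp_tg_int μ hg hM0 hM t₀
  · exact (hg.continuous.mul
      (Real.continuous_exp.comp (continuous_const.mul hg.continuous))).aestronglyMeasurable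
  · refine Eventually.of_forall fun x => ?_
    rw [lipschitzOnWith_iff_dist_le_mul]
    intro p hp q hq
    have hpq : |p - q| ≤ 2 := by
      have h1 : |p - t₀| < 1 := by simpa [Real.dist_eq] using hp
      have h2 : |q - t₀| < 1 := by simpa [Real.dist_eq] using hq
      have := abs_sub_abs_le_abs_sub p q
      calc |p - q| = |(p - t₀) - (q - t₀)| := by ring_nf
        _ ≤ |p - t₀| + |q - t₀| := abs_sub _ _
        _ ≤ 2 := by linarith
    have hq' : |q| ≤ |t₀| + 1 := by
      have h2 : |q - t₀| < 1 := by simpa [Real.dist_eq] using hq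
      calc |q| = |(q - t₀) + t₀| := by ring_nf
        _ ≤ |q - t₀| + |t₀| := abs_add_le _ _
        _ ≤ |t₀| + 1 := by linarith
    have hsplit : Real.exp (p * g x) - Real.exp (q * g x)
        = Real.exp (q * g x) * (Real.exp ((p - q) * g x) - 1) := by
      rw [mul_sub, mul_one, ← Real.exp_add]; ring_nf
    rw [Real.dist_eq, Real.dist_eq, hsplit, abs_mul, abs_of_pos (Real.exp_pos _)]
    have h3 : |Real.exp ((p - q) * g x) - 1| ≤ |(p - q) * g x| * Real.exp |(p - q) * g x| :=
      abs_exp_sub_one_le' _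
    have habs : |(p - q) * g x| ≤ |p - q| * M := by
      rw [abs_mul]; exact mul_le_mul_of_nonneg_left (hM x) (abs_nonneg _)
    have h4 : |(p - q) * g x| * Real.exp |(p - q) * g x| ≤ (|p - q| * M) * Real.exp (2 * M) := by
      refine mul_le_mul habs ?_ (Real.exp_pos _).le (by positivity)
      rw [Real.exp_le_exp]
      refine habs.trans ?_
      exact mul_le_mul_of_nonneg_right hpq hM0
    have h5 : Real.exp (q * g x) ≤ Real.exp ((|t₀| + 1) * M) := by
      rw [Real.exp_le_exp]
      calc q * g x ≤ |q * g x| := le_abs_self _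
        _ = |q| * |g x| := abs_mul _ _
        _ ≤ (|t₀| + 1) * M :=
          mul_le_mul hq' (hM x) (abs_nonneg _) (by positivity)
    have hnn : (0:ℝ) ≤ M * Real.exp ((|t₀| + 1) * M) * Real.exp (2 * M) := by positivity
    calc Real.exp (q * g x) * |Real.exp ((p - q) * g x) - 1|
        ≤ Real.exp ((|t₀| + 1) * M) * ((|p - q| * M) * Real.exp (2 * M)) := by
          refine mul_le_mul h5 (h3.trans h4) (abs_nonneg _) (Real.exp_pos _).le
      _ = ↑(Real.nnabs (M * Real.exp ((|t₀| + 1) * M) * Real.exp (2 * M))) * |p - q| := by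
          rw [Real.coe_nnabs, abs_of_nonneg hnn]; ring
  · exact integrable_const _
  · refine Eventually.of_forall fun x => ?_
    have : HasDerivAt (fun t : ℝ => t * g x) (g x) t₀ := by
      simpa using (hasDerivAt_id t₀).mul_const (g x)
    simpa [mul_comm] using this.exp


lemma exp_comp_lipschitz {a : ℝ} (ha : 0 ≤ a) :
    LipschitzWith (Real.nnabs (a * κ * Real.exp (3 * a * M)))
      (fun y => Real.exp (a * g y)) := by
  rw [lipschitzWith_iff_dist_le_mul]
  intro y z
  have hsplit : Real.exp (a * g y) - Real.exp (a * g z)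
      = Real.exp (a * g z) * (Real.exp (a * g y - a * g z) - 1) := by
    rw [mul_sub, mul_one, ← Real.exp_add]; ring_nf
  have h2M : |a * g y - a * g z| ≤ a * (2 * M) := by
    rw [← mul_sub, abs_mul, abs_of_nonneg ha]
    refine mul_le_mul_of_nonneg_left ?_ ha
    calc |g y - g z| ≤ |g y| + |g z| := abs_sub _ _
      _ ≤ 2 * M := by linarith [hM y, hM z]
  have hκd : |a * g y - a * g z| ≤ a * κ * dist y z := by
    rw [← mul_sub, abs_mul, abs_of_nonneg ha, mul_assoc]
    refine mul_le_mul_of_nonneg_left ?_ ha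
    have := hg.dist_le_mul y z
    rwa [Real.dist_eq] at this
  rw [Real.dist_eq, hsplit, abs_mul, abs_of_pos (Real.exp_pos _)]
  have h1 : |Real.exp (a * g y - a * g z) - 1|
      ≤ (a * κ * dist y z) * Real.exp (a * (2 * M)) := by
    refine (abs_exp_sub_one_le' _).trans ?_
    refine mul_le_mul hκd (Real.exp_le_exp.mpr h2M) (Real.exp_pos _).le ?_
    positivity
  have h2 : Real.exp (a * g z) ≤ Real.exp (a * M) := by
    rw [Real.exp_le_exp]
    calc a * g z ≤ |a * g z| := le_abs_self _
      _ = a * |g z| := by rw [abs_mul, abs_of_nonneg ha]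
      _ ≤ a * M := mul_le_mul_of_nonneg_left (hM z) ha
  have hnn : (0:ℝ) ≤ a * κ * Real.exp (3 * a * M) := by positivity
  rw [Real.coe_nnabs, abs_of_nonneg hnn]
  calc Real.exp (a * g z) * |Real.exp (a * g y - a * g z) - 1|
      ≤ Real.exp (a * M) * ((a * κ * dist y z) * Real.exp (a * (2 * M))) := by
        refine mul_le_mul h2 h1 (abs_nonneg _) (Real.exp_pos _).le
    _ = a * κ * Real.exp (3 * a * M) * dist y z := by
        rw [show (3:ℝ) * a * M = a * M + a * (2 * M) by ring, Real.exp_add]; ring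

lemma LSI_step
    (hLSI : ∀ f : X → ℝ, LocallyLipschitz f →
      ∫ x, f x ^ 2 * Real.log (f x ^ 2 / ∫ y, f y ^ 2 ∂μ) ∂μ
        ≤ 2 * C * ∫ x, gradNorm f x ^ 2 ∂μ)
    (hC : 0 < C) {t : ℝ} (ht : 0 < t) :
    t * ∫ x, g x * Real.exp (t * g x) ∂μ
      - (∫ x, Real.exp (t * g x) ∂μ) * Real.log (∫ x, Real.exp (t * g x) ∂μ)
    ≤ (C * (κ:ℝ)^2 / 2) * t^2 * ∫ x, Real.exp (t * g x) ∂μ := by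
  set f : X → ℝ := fun y => Real.exp ((t/2) * g y) with hf
  have ha : (0:ℝ) ≤ t/2 := by linarith
  have hfsq : ∀ x, f x ^ 2 = Real.exp (t * g x) := fun x => by
    rw [hf, sq, ← Real.exp_add]; ring_nf
  have hHpos := H_pos μ hg hM0 hM t
  have hflip := hLSI f (exp_comp_lipschitz hg hM0 hM ha).locallyLipschitz
  have hint_eq : (∫ y, f y ^ 2 ∂μ) = ∫ x, Real.exp (t * g x) ∂μ := by
    exact integral_congr_ae (Eventually.of_forall fun x => hfsq x)
  rw [hint_eq] at hflip
  set H := ∫ x, Real.exp (t * g x) ∂μ with hH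
  -- LHS computation
  have lhs_eq : (∫ x, f x ^ 2 * Real.log (f x ^ 2 / H) ∂μ)
      = t * (∫ x, g x * Real.exp (t * g x) ∂μ) - H * Real.log H := by
    have step1 : (∫ x, f x ^ 2 * Real.log (f x ^ 2 / H) ∂μ)
        = ∫ x, (t * (g x * Real.exp (t * g x)) - Real.log H * Real.exp (t * g x)) ∂μ := by
      refine integral_congr_ae (Eventually.of_forall fun x => ?_)
      show f x ^ 2 * Real.log (f x ^ 2 / H)
        = t * (g x * Real.exp (t * g x)) - Real.log H * Real.exp (t * g x)
      rw [hfsq x, Real.log_div (Real.exp_ne_zero _) (ne_of_gt hHpos), Real.log_exp]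
      ring
    rw [step1, integral_sub ((g_exp_tg_int μ hg hM0 hM t).const_mul t)
      ((exp_tg_int μ hg hM0 hM t).const_mul (Real.log H)),
      integral_const_mul, integral_const_mul]
    ring
  -- RHS bound
  have rhs_bd : (∫ x, gradNorm f x ^ 2 ∂μ) ≤ ((t/2) * κ)^2 * H := by
    have hptwise : ∀ x, gradNorm f x ^ 2 ≤ ((t/2) * κ)^2 * Real.exp (t * g x) := by
      intro x
      obtain ⟨h0, hub⟩ := gradNorm_exp_bounds hg ha x
      have hpow := pow_le_pow_left₀ h0 hub 2
      have hexp2 : Real.exp (t/2 * g x) ^ 2 = Real.exp (t * g x) := by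
        rw [← Real.exp_nat_mul]
        congr 1
        push_cast
        ring
      refine hpow.trans (le_of_eq ?_)
      rw [mul_pow, hexp2]
    calc (∫ x, gradNorm f x ^ 2 ∂μ)
        ≤ ∫ x, ((t/2) * κ)^2 * Real.exp (t * g x) ∂μ := by
          refine integral_mono_of_nonneg (Eventually.of_forall fun x => sq_nonneg _)
            ((exp_tg_int μ hg hM0 hM t).const_mul _)
            (Eventually.of_forall fun x => hptwise x)
      _ = ((t/2) * κ)^2 * H := by rw [integral_const_mul]
  calc t * (∫ x, g x * Real.exp (t * g x) ∂μ) - H * Real.log H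
      = ∫ x, f x ^ 2 * Real.log (f x ^ 2 / H) ∂μ := lhs_eq.symm
    _ ≤ 2 * C * ∫ x, gradNorm f x ^ 2 ∂μ := hflip
    _ ≤ 2 * C * (((t/2) * κ)^2 * H) :=
        mul_le_mul_of_nonneg_left rhs_bd (by linarith)
    _ = (C * (κ:ℝ)^2 / 2) * t^2 * H := by ring

lemma mgf_bound
    (hLSI : ∀ f : X → ℝ, LocallyLipschitz f →
      ∫ x, f x ^ 2 * Real.log (f x ^ 2 / ∫ y, f y ^ 2 ∂μ) ∂μ
        ≤ 2 * C * ∫ x, gradNorm f x ^ 2 ∂μ)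
    (hC : 0 < C) {t : ℝ} (ht : 0 < t) :
    ∫ x, Real.exp (t * g x) ∂μ
      ≤ Real.exp (t * (∫ x, g x ∂μ) + (C * (κ:ℝ)^2 / 2) * t^2) := by
  set H : ℝ → ℝ := fun s => ∫ x, Real.exp (s * g x) ∂μ with hHdef
  set D : ℝ → ℝ := fun s => ∫ x, g x * Real.exp (s * g x) ∂μ with hDdef
  set c : ℝ := C * (κ:ℝ)^2 / 2 with hcdef
  set E : ℝ := ∫ x, g x ∂μ with hEdef
  set ψ : ℝ → ℝ := fun s => Real.log (H s) / s - c * s with hψdef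
  have hHD : ∀ s : ℝ, HasDerivAt H (D s) s := fun s => H_hasDeriv μ hg hM0 hM s
  have hHpos : ∀ s : ℝ, 0 < H s := fun s => H_pos μ hg hM0 hM s
  have hψderiv : ∀ s ∈ Set.Ioi (0:ℝ),
      HasDerivAt ψ ((D s / H s * s - Real.log (H s)) / s^2 - c) s := by
    intro s hs
    have hs0 : (0:ℝ) < s := hs
    have h1 : HasDerivAt (fun u => Real.log (H u)) (D s / H s) s :=
      (hHD s).log (ne_of_gt (hHpos s))
    have h2 : HasDerivAt (fun u => Real.log (H u) / u)
        ((D s / H s * s - Real.log (H s) * 1) / s^2) s :=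
      h1.div (hasDerivAt_id s) (ne_of_gt hs0)
    have h3 : HasDerivAt (fun u : ℝ => c * u) c s := by
      simpa using (hasDerivAt_id s).const_mul c
    have h4 := h2.sub h3
    simp only [mul_one] at h4
    exact h4
  have hψnonpos : ∀ s ∈ interior (Set.Ioi (0:ℝ)), deriv ψ s ≤ 0 := by
    rw [interior_Ioi]
    intro s hs
    have hs0 : (0:ℝ) < s := hs
    rw [(hψderiv s hs).deriv]
    have key := LSI_step μ hg hM0 hM hLSI hC hs0
    have hrw : D s / H s * s - Real.log (H s)
        = (s * D s - H s * Real.log (H s)) / H s := by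
      rw [eq_div_iff (ne_of_gt (hHpos s)), div_mul_eq_mul_div, sub_mul,
        div_mul_cancel₀ _ (ne_of_gt (hHpos s))]
      ring
    have hpos : (0:ℝ) < H s * s^2 := mul_pos (hHpos s) (by positivity)
    rw [hrw, sub_nonpos, div_div, div_le_iff₀ hpos]
    calc s * D s - H s * Real.log (H s) ≤ c * s^2 * H s := key
      _ = c * (H s * s^2) := by ring
  have hanti : AntitoneOn ψ (Set.Ioi (0:ℝ)) := by
    refine antitoneOn_of_deriv_nonpos (convex_Ioi 0) ?_ ?_ hψnonpos
    · exact fun s hs => ((hψderiv s hs).continuousAt).continuousWithinAt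
    · rw [interior_Ioi]
      exact fun s hs => ((hψderiv s hs).differentiableAt).differentiableWithinAt
  have hH0 : H 0 = 1 := by
    simp [hHdef]
  have hD0 : D 0 = E := by
    simp [hDdef, hEdef]
  have hlim : Filter.Tendsto ψ (nhdsWithin 0 (Set.Ioi (0:ℝ))) (nhds E) := by
    have hlog0 : HasDerivAt (fun u => Real.log (H u)) E 0 := by
      have := (hHD 0).log (ne_of_gt (hHpos 0))
      rwa [hH0, hD0, div_one] at this
    have hslope := hasDerivAt_iff_tendsto_slope.mp hlog0
    have hslope_eq : ∀ u : ℝ, slope (fun u => Real.log (H u)) 0 u = Real.log (H u) / u := by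
      intro u
      rw [slope_def_field, hH0, Real.log_one, sub_zero, sub_zero]
    have h1 : Filter.Tendsto (fun u => Real.log (H u) / u)
        (nhdsWithin 0 (Set.Ioi (0:ℝ))) (nhds E) := by
      refine Filter.Tendsto.congr hslope_eq ?_
      exact hslope.mono_left (nhdsWithin_mono 0 (fun u hu => ne_of_gt hu))
    have h2 : Filter.Tendsto (fun u : ℝ => c * u)
        (nhdsWithin 0 (Set.Ioi (0:ℝ))) (nhds 0) := by
      have : Filter.Tendsto (fun u : ℝ => c * u) (nhds 0) (nhds (c * 0)) :=
        (continuous_const.mul continuous_id).tendsto 0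
      rw [mul_zero] at this
      exact this.mono_left nhdsWithin_le_nhds
    have := h1.sub h2
    rwa [sub_zero] at this
  have hψt : ψ t ≤ E := by
    have hev : ∀ᶠ s in nhdsWithin 0 (Set.Ioi (0:ℝ)), ψ t ≤ ψ s := by
      filter_upwards [Ioo_mem_nhdsGT_of_mem (Set.mem_Ico.mpr ⟨le_refl 0, ht⟩),
        self_mem_nhdsWithin] with s hs hs'
      exact hanti hs' ht hs.2.le
    exact ge_of_tendsto hlim hev
  have h5 : Real.log (H t) ≤ t * E + c * t^2 := by
    have h6 : Real.log (H t) / t ≤ E + c * t := by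
      have : Real.log (H t) / t - c * t ≤ E := hψt
      linarith
    rw [div_le_iff₀ ht] at h6
    nlinarith [h6]
  calc H t = Real.exp (Real.log (H t)) := (Real.exp_log (hHpos t)).symm
    _ ≤ Real.exp (t * E + c * t^2) := Real.exp_le_exp.mpr h5

lemma bounded_concentration
    (hLSI : ∀ f : X → ℝ, LocallyLipschitz f →
      ∫ x, f x ^ 2 * Real.log (f x ^ 2 / ∫ y, f y ^ 2 ∂μ) ∂μ
        ≤ 2 * C * ∫ x, gradNorm f x ^ 2 ∂μ)
    (hC : 0 < C) (hκ : 0 < (κ:ℝ)) {ε' : ℝ} (hε' : 0 < ε') :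
    μ {x | (∫ y, g y ∂μ) + ε' ≤ g x}
      ≤ ENNReal.ofReal (Real.exp (-ε'^2 / (2 * C * (κ:ℝ)^2))) := by
  set E : ℝ := ∫ y, g y ∂μ with hEdef
  set t : ℝ := ε' / (C * (κ:ℝ)^2) with htdef
  have ht : 0 < t := by positivity
  have hmgf := mgf_bound μ hg hM0 hM hLSI hC ht
  set a : ℝ := Real.exp (t * (E + ε')) with hadef
  have ha : 0 < a := Real.exp_pos _
  have hset : {x | E + ε' ≤ g x} = {x | a ≤ Real.exp (t * g x)} := by
    ext x
    simp only [Set.mem_setOf_eq, hadef, Real.exp_le_exp]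
    exact ⟨fun h => mul_le_mul_of_nonneg_left h ht.le,
      fun h => le_of_mul_le_mul_left h ht⟩
  have hmarkov := mul_meas_ge_le_integral_of_nonneg
    (μ := μ) (f := fun x => Real.exp (t * g x))
    (Eventually.of_forall fun x => (Real.exp_pos _).le) (exp_tg_int μ hg hM0 hM t) a
  rw [← hset] at hmarkov
  have h1 : a * (μ {x | E + ε' ≤ g x}).toReal
      ≤ Real.exp (t * E + (C * (κ:ℝ)^2 / 2) * t^2) := le_trans hmarkov hmgf
  have h2 : (μ {x | E + ε' ≤ g x}).toReal
      ≤ Real.exp (t * E + (C * (κ:ℝ)^2 / 2) * t^2) / a := by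
    rw [le_div_iff₀ ha]
    linarith [h1]
  have h3 : Real.exp (t * E + (C * (κ:ℝ)^2 / 2) * t^2) / a
      = Real.exp (-ε'^2 / (2 * C * (κ:ℝ)^2)) := by
    rw [hadef, ← Real.exp_sub]
    congr 1
    rw [htdef]
    field_simp
    ring
  rw [← ENNReal.ofReal_toReal (measure_ne_top μ {x | E + ε' ≤ g x})]
  exact ENNReal.ofReal_le_ofReal (h2.trans_eq h3)

end Core

/-- Herbst's lemma: a metric probability space satisfying a logarithmic Sobolev
inequality with constant `C > 0` has sub-Gaussian concentration for Lipschitz functions: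
`Pr[F ≥ E[F] + ε] ≤ exp(−ε²/(2Cκ²))`. -/
theorem herbst {X : Type*} [MetricSpace X] [MeasurableSpace X] [BorelSpace X]
    (μ : Measure X) [IsProbabilityMeasure μ] (C : ℝ) (hC : 0 < C)
    (hLSI : ∀ f : X → ℝ, LocallyLipschitz f →
      ∫ x, f x ^ 2 * Real.log (f x ^ 2 / ∫ y, f y ^ 2 ∂μ) ∂μ
        ≤ 2 * C * ∫ x, gradNorm f x ^ 2 ∂μ)
    (κ : ℝ≥0) (F : X → ℝ) (hF : LipschitzWith κ F) (hFint : Integrable F μ)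
    (ε : ℝ) (hε : 0 < ε) :
    μ {x | (∫ y, F y ∂μ) + ε ≤ F x}
      ≤ ENNReal.ofReal (Real.exp (-ε ^ 2 / (2 * C * (κ : ℝ) ^ 2))) := by
  by_cases hκ0 : (κ:ℝ) = 0
  · have hone : ENNReal.ofReal (Real.exp (-ε ^ 2 / (2 * C * (κ:ℝ) ^ 2))) = 1 := by
      rw [hκ0]
      norm_num
    rw [hone]
    exact prob_le_one
  have hκ : 0 < (κ:ℝ) := lt_of_le_of_ne κ.coe_nonneg (Ne.symm hκ0)
  -- truncations
  set g : ℕ → X → ℝ := fun n x => max (min (F x) n) (-(n:ℝ)) with hgdef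
  have hglip : ∀ n : ℕ, LipschitzWith κ (g n) := fun n =>
    (hF.min_const (n:ℝ)).max_const (-(n:ℝ))
  have hgbd : ∀ n : ℕ, ∀ x, |g n x| ≤ (n:ℝ) := by
    intro n x
    rw [abs_le]
    constructor
    · exact le_max_right _ _
    · exact max_le (le_trans (min_le_right _ _) le_rfl)
        (neg_le_self (Nat.cast_nonneg n))
  have hgabs : ∀ n : ℕ, ∀ x, |g n x| ≤ |F x| := by
    intro n x
    have hn0 : (0:ℝ) ≤ (n:ℝ) := Nat.cast_nonneg n
    rw [hgdef]
    simp only []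
    rcases le_or_gt 0 (F x) with h | h
    · rw [abs_of_nonneg h, abs_le]
      constructor
      · have h1 : (0:ℝ) ≤ min (F x) (n:ℝ) := le_min h hn0
        have h2 := le_max_left (min (F x) (n:ℝ)) (-(n:ℝ))
        linarith
      · exact max_le (min_le_left _ _) (by linarith)
    · rw [abs_of_neg h, abs_le, neg_neg]
      have hmin : min (F x) (n:ℝ) = F x := min_eq_left (by linarith)
      rw [hmin]
      exact ⟨le_max_left _ _, max_le (by linarith) (by linarith)⟩
  have hgtend : ∀ x, Filter.Tendsto (fun n => g n x) atTop (nhds (F x)) := by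
    intro x
    refine tendsto_atTop_of_eventually_const (i₀ := Nat.ceil |F x|) fun n hn => ?_
    have h1 : |F x| ≤ (n:ℝ) := le_trans (Nat.le_ceil _) (Nat.cast_le.mpr hn)
    have h2 := abs_le.mp h1
    rw [hgdef]
    simp only []
    rw [min_eq_left h2.2, max_eq_left h2.1]
  have hEtend : Filter.Tendsto (fun n => ∫ x, g n x ∂μ) atTop (nhds (∫ x, F x ∂μ)) := by
    refine tendsto_integral_of_dominated_convergence (fun x => |F x|)
      (fun n => ((hglip n).continuous).aestronglyMeasurable) hFint.abs
      (fun n => Eventually.of_forall fun x => by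
        rw [Real.norm_eq_abs]; exact hgabs n x)
      (Eventually.of_forall hgtend)
  set EF : ℝ := ∫ y, F y ∂μ with hEFdef
  set S : Set X := {x | EF + ε ≤ F x} with hSdef
  -- eventually, the bounded concentration applies
  have hev : ∀ᶠ n : ℕ in atTop,
      μ S ≤ ENNReal.ofReal
        (Real.exp (-(EF + ε - ∫ x, g n x ∂μ)^2 / (2 * C * (κ:ℝ)^2))) := by
    have hev1 : ∀ᶠ n : ℕ in atTop, ∫ x, g n x ∂μ < EF + ε := by
      refine hEtend.eventually_lt_const ?_
      linarith
    have hev2 : ∀ᶠ n : ℕ in atTop, EF + ε ≤ (n:ℝ) :=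
      tendsto_natCast_atTop_atTop.eventually_ge_atTop (EF + ε)
    filter_upwards [hev1, hev2] with n hn1 hn2
    set En : ℝ := ∫ x, g n x ∂μ with hEndef
    set εn : ℝ := EF + ε - En with hεndef
    have hεn : 0 < εn := by rw [hεndef]; linarith
    have hsub : S ⊆ {x | En + εn ≤ g n x} := by
      intro x hx
      have hx' : EF + ε ≤ F x := hx
      have h1 : EF + ε ≤ min (F x) (n:ℝ) := le_min hx' hn2
      have h2 : EF + ε ≤ g n x := h1.trans (le_max_left _ _)
      show En + εn ≤ g n x
      rw [hεndef]
      linarith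
    calc μ S ≤ μ {x | En + εn ≤ g n x} := measure_mono hsub
      _ ≤ ENNReal.ofReal (Real.exp (-εn^2 / (2 * C * (κ:ℝ)^2))) :=
          bounded_concentration μ (hglip n) (Nat.cast_nonneg n) (hgbd n) hLSI hC hκ hεn
  -- pass to the limit
  have hlim : Filter.Tendsto
      (fun n : ℕ => ENNReal.ofReal
        (Real.exp (-(EF + ε - ∫ x, g n x ∂μ)^2 / (2 * C * (κ:ℝ)^2))))
      atTop (nhds (ENNReal.ofReal (Real.exp (-ε^2 / (2 * C * (κ:ℝ)^2))))) := by
    have h1 : Filter.Tendsto (fun n : ℕ => EF + ε - ∫ x, g n x ∂μ) atTop (nhds ε) := by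
      have := (tendsto_const_nhds (x := EF + ε) (f := atTop (α := ℕ))).sub hEtend
      simpa using this
    have h2 : Filter.Tendsto
        (fun n : ℕ => Real.exp (-(EF + ε - ∫ x, g n x ∂μ)^2 / (2 * C * (κ:ℝ)^2)))
        atTop (nhds (Real.exp (-ε^2 / (2 * C * (κ:ℝ)^2)))) := by
      exact Filter.Tendsto.rexp (Filter.Tendsto.div_const ((h1.pow 2).neg) _)
    exact (ENNReal.continuous_ofReal.tendsto _).comp h2
  exact ge_of_tendsto hlim hev
end

section
/- For every nonnegative measurable function f with E[f²] < ∞ on a probability space, E[f² log(f²/E[f²])] = sup over measurable g with E[e^g] ≤ 1 of E[f² g]. -/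
open MeasureTheory

lemma key_ineq (a t : ℝ) (ha : 0 ≤ a) : a * t ≤ a * Real.log a + Real.exp t - a := by
  rcases eq_or_lt_of_le ha with h | h
  · simp [← h]; positivity
  · have h1 : Real.log (Real.exp t / a) ≤ Real.exp t / a - 1 :=
      Real.log_le_sub_one_of_pos (by positivity)
    have h2 : Real.log (Real.exp t / a) = t - Real.log a := by
      rw [Real.log_div (Real.exp_pos t).ne' h.ne', Real.log_exp]
    have h3 : a * (t - Real.log a) ≤ a * (Real.exp t / a - 1) := by
      rw [← h2]; exact mul_le_mul_of_nonneg_left h1 ha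
    have h4 : a * (Real.exp t / a - 1) = Real.exp t - a := by
      field_simp
    nlinarith

lemma elem_le {Ω : Type*} [MeasurableSpace Ω] (μ : Measure Ω) [IsProbabilityMeasure μ]
    (f g : Ω → ℝ) (c : ℝ) (hc : 0 < c) (hf2 : Integrable (fun x => f x ^ 2) μ)
    (hfc : (∫ x, f x ^ 2 ∂μ) = c)
    (hL : Integrable (fun x => f x ^ 2 * Real.log (f x ^ 2 / c)) μ)
    (hge : Integrable (fun x => Real.exp (g x)) μ)
    (hfg : Integrable (fun x => f x ^ 2 * g x) μ)
    (hg1 : (∫ x, Real.exp (g x) ∂μ) ≤ 1) :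
    ∫ x, f x ^ 2 * g x ∂μ ≤ ∫ x, f x ^ 2 * Real.log (f x ^ 2 / c) ∂μ := by
  have hpt : ∀ x, f x ^ 2 * g x ≤
      f x ^ 2 * Real.log (f x ^ 2 / c) + c * Real.exp (g x) - f x ^ 2 := by
    intro x
    have h := key_ineq (f x ^ 2 / c) (g x) (by positivity)
    have h2 := mul_le_mul_of_nonneg_left h hc.le
    have e1 : c * (f x ^ 2 / c * g x) = f x ^ 2 * g x := by field_simp
    have e2 : c * (f x ^ 2 / c * Real.log (f x ^ 2 / c) + Real.exp (g x) - f x ^ 2 / c)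
        = f x ^ 2 * Real.log (f x ^ 2 / c) + c * Real.exp (g x) - f x ^ 2 := by
      field_simp
    rw [e1, e2] at h2; exact h2
  have hAB : Integrable (fun x => f x ^ 2 * Real.log (f x ^ 2 / c)
      + c * Real.exp (g x)) μ := hL.add (hge.const_mul c)
  have hInt : Integrable (fun x => f x ^ 2 * Real.log (f x ^ 2 / c)
      + c * Real.exp (g x) - f x ^ 2) μ := hAB.sub hf2
  have h3 : ∫ x, f x ^ 2 * g x ∂μ ≤ ∫ x, (f x ^ 2 * Real.log (f x ^ 2 / c)
      + c * Real.exp (g x) - f x ^ 2) ∂μ := integral_mono hfg hInt hpt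
  have h4 : ∫ x, (f x ^ 2 * Real.log (f x ^ 2 / c) + c * Real.exp (g x) - f x ^ 2) ∂μ
      = (∫ x, f x ^ 2 * Real.log (f x ^ 2 / c) ∂μ) + c * (∫ x, Real.exp (g x) ∂μ) - c := by
    rw [integral_sub hAB hf2, integral_add hL (hge.const_mul c),
      MeasureTheory.integral_const_mul, hfc]
  have h5 : c * (∫ x, Real.exp (g x) ∂μ) - c ≤ 0 := by nlinarith
  linarith [h3, h4.le, h4.ge]

lemma eps_g {Ω : Type*} [MeasurableSpace Ω] (μ : Measure Ω) [IsProbabilityMeasure μ]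
    (f : Ω → ℝ) (hfm : Measurable f) (hf2 : Integrable (fun x => f x ^ 2) μ)
    (c : ℝ) (hc : 0 < c) (hfc : (∫ x, f x ^ 2 ∂μ) = c)
    (hL : Integrable (fun x => f x ^ 2 * Real.log (f x ^ 2 / c)) μ)
    (ε : ℝ) (hε0 : 0 < ε) (hε1 : ε < 1) :
    ∃ g : Ω → ℝ, Measurable g ∧ Integrable (fun x => Real.exp (g x)) μ ∧
      Integrable (fun x => f x ^ 2 * g x) μ ∧ (∫ x, Real.exp (g x) ∂μ) ≤ 1 ∧
      (∫ x, f x ^ 2 * Real.log (f x ^ 2 / c) ∂μ) + Real.log (1 - ε) * c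
        ≤ ∫ x, f x ^ 2 * g x ∂μ := by
  have h1ε : 0 < 1 - ε := by linarith
  set g : Ω → ℝ := fun x => Real.log ((1 - ε) * (f x ^ 2 / c) + ε) with hg
  have hargpos : ∀ x, 0 < (1 - ε) * (f x ^ 2 / c) + ε := by
    intro x
    have : 0 ≤ (1 - ε) * (f x ^ 2 / c) := by positivity
    linarith
  have hgm : Measurable g := by
    apply Measurable.log
    exact (((hfm.pow_const 2).div_const c).const_mul _).add_const _
  have hexp : ∀ x, Real.exp (g x) = (1 - ε) * (f x ^ 2 / c) + ε := fun x =>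
    Real.exp_log (hargpos x)
  have hexpfun : (fun x => Real.exp (g x)) = fun x => (1 - ε) / c * f x ^ 2 + ε := by
    funext x; rw [hexp x]; ring
  have hexpint : Integrable (fun x => Real.exp (g x)) μ := by
    rw [hexpfun]; exact (hf2.const_mul _).add (integrable_const _)
  have hexpval : (∫ x, Real.exp (g x) ∂μ) = 1 := by
    rw [hexpfun, integral_add (hf2.const_mul _) (integrable_const _),
      MeasureTheory.integral_const_mul, hfc, integral_const, probReal_univ, smul_eq_mul]
    field_simp
    ring
  -- pointwise bounds
  have hlow : ∀ x, f x ^ 2 * Real.log ε ≤ f x ^ 2 * g x := by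
    intro x
    apply mul_le_mul_of_nonneg_left _ (by positivity)
    apply Real.log_le_log hε0
    have : 0 ≤ (1 - ε) * (f x ^ 2 / c) := by positivity
    linarith
  have hup : ∀ x, f x ^ 2 * g x ≤
      f x ^ 2 * Real.log (f x ^ 2 / c) + f x ^ 2 * Real.log (1 - ε) + ε * c / (1 - ε) := by
    intro x
    rcases eq_or_lt_of_le (sq_nonneg (f x)) with h0 | h0
    · have hf0 : f x ^ 2 = 0 := h0.symm
      rw [hf0]
      have : 0 ≤ ε * c / (1 - ε) := by positivity
      simpa using this
    · have hf0 : 0 < f x ^ 2 := by nlinarith [sq_nonneg (f x)]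
      have ha : 0 < (1 - ε) * (f x ^ 2 / c) := by positivity
      -- log(a + ε) ≤ log a + ε / a
      have key : g x ≤ Real.log ((1 - ε) * (f x ^ 2 / c)) + ε / ((1 - ε) * (f x ^ 2 / c)) := by
        have h2 : Real.log (((1 - ε) * (f x ^ 2 / c) + ε) / ((1 - ε) * (f x ^ 2 / c)))
            ≤ ((1 - ε) * (f x ^ 2 / c) + ε) / ((1 - ε) * (f x ^ 2 / c)) - 1 :=
          Real.log_le_sub_one_of_pos (by positivity)
        rw [Real.log_div (hargpos x).ne' ha.ne'] at h2
        have h3 : ((1 - ε) * (f x ^ 2 / c) + ε) / ((1 - ε) * (f x ^ 2 / c)) - 1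
            = ε / ((1 - ε) * (f x ^ 2 / c)) := by rw [div_sub_one ha.ne']; ring
        rw [h3] at h2
        linarith
      have hlogmul : Real.log ((1 - ε) * (f x ^ 2 / c))
          = Real.log (1 - ε) + Real.log (f x ^ 2 / c) :=
        Real.log_mul h1ε.ne' (by positivity)
      have h4 : f x ^ 2 * g x ≤ f x ^ 2 * (Real.log (1 - ε) + Real.log (f x ^ 2 / c)
          + ε / ((1 - ε) * (f x ^ 2 / c))) := by
        apply mul_le_mul_of_nonneg_left _ hf0.le
        rw [← hlogmul]; linarith [key]
      have h5 : f x ^ 2 * (ε / ((1 - ε) * (f x ^ 2 / c))) = ε * c / (1 - ε) := by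
        have hfx : f x ≠ 0 := by rintro h; rw [h] at hf0; norm_num at hf0
        field_simp
      nlinarith [h4, h5]
  have hmidm : AEStronglyMeasurable (fun x => f x ^ 2 * g x) μ :=
    ((hfm.pow_const 2).mul hgm).aestronglyMeasurable
  have hLint : Integrable (fun x => f x ^ 2 * Real.log ε) μ := hf2.mul_const _
  have hUint : Integrable (fun x => f x ^ 2 * Real.log (f x ^ 2 / c)
      + f x ^ 2 * Real.log (1 - ε) + ε * c / (1 - ε)) μ :=
    (hL.add (hf2.mul_const _)).add (integrable_const _)
  have habs : Integrable (fun x => |f x ^ 2 * Real.log ε|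
      + |f x ^ 2 * Real.log (f x ^ 2 / c) + f x ^ 2 * Real.log (1 - ε) + ε * c / (1 - ε)|) μ :=
    hLint.abs.add hUint.abs
  have hmid : Integrable (fun x => f x ^ 2 * g x) μ := by
    apply Integrable.mono' habs hmidm
    filter_upwards with x
    rw [Real.norm_eq_abs, abs_le]
    constructor
    · have := hlow x
      have h1 := neg_abs_le (f x ^ 2 * Real.log ε)
      have h2 := abs_nonneg (f x ^ 2 * Real.log (f x ^ 2 / c)
        + f x ^ 2 * Real.log (1 - ε) + ε * c / (1 - ε))
      linarith
    · have := hup x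
      have h1 := le_abs_self (f x ^ 2 * Real.log (f x ^ 2 / c)
        + f x ^ 2 * Real.log (1 - ε) + ε * c / (1 - ε))
      have h2 := abs_nonneg (f x ^ 2 * Real.log ε)
      linarith
  refine ⟨g, hgm, hexpint, hmid, hexpval.le, ?_⟩
  have hptlow : ∀ x, f x ^ 2 * Real.log (f x ^ 2 / c) + Real.log (1 - ε) * f x ^ 2
      ≤ f x ^ 2 * g x := by
    intro x
    rcases eq_or_lt_of_le (sq_nonneg (f x)) with h0 | h0
    · rw [← h0]; simp
    · have ha : 0 < (1 - ε) * (f x ^ 2 / c) := by positivity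
      have key : Real.log ((1 - ε) * (f x ^ 2 / c)) ≤ g x := by
        apply Real.log_le_log ha; linarith
      have hlogmul : Real.log ((1 - ε) * (f x ^ 2 / c))
          = Real.log (1 - ε) + Real.log (f x ^ 2 / c) :=
        Real.log_mul h1ε.ne' (by positivity)
      nlinarith [key, hlogmul]
  have hmono : ∫ x, (f x ^ 2 * Real.log (f x ^ 2 / c) + Real.log (1 - ε) * f x ^ 2) ∂μ
      ≤ ∫ x, f x ^ 2 * g x ∂μ :=
    integral_mono (hL.add (hf2.const_mul _)) hmid hptlow
  have heq : ∫ x, (f x ^ 2 * Real.log (f x ^ 2 / c) + Real.log (1 - ε) * f x ^ 2) ∂μ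
      = (∫ x, f x ^ 2 * Real.log (f x ^ 2 / c) ∂μ) + Real.log (1 - ε) * c := by
    rw [integral_add hL (hf2.const_mul _), MeasureTheory.integral_const_mul, hfc]
  linarith [hmono, heq.le, heq.ge]

section Trunc

variable {Ω : Type*} [MeasurableSpace Ω] (μ : Measure Ω) [IsProbabilityMeasure μ]
  (f : Ω → ℝ) (c : ℝ)

lemma phi_pos (hc : 0 < c) (x : Ω) : 0 < f x ^ 2 / (2 * c) + 1 / 2 := by positivity

lemma phi_lb (hc : 0 < c) (x : Ω) : -Real.log 2 ≤ Real.log (f x ^ 2 / (2 * c) + 1 / 2) := by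
  have h1 : Real.log (1 / 2 : ℝ) = -Real.log 2 := by
    rw [Real.log_div one_ne_zero two_ne_zero, Real.log_one]; ring
  rw [← h1]
  apply Real.log_le_log (by norm_num)
  have : 0 ≤ f x ^ 2 / (2 * c) := by positivity
  linarith

lemma gn_props (hfm : Measurable f) (hf2 : Integrable (fun x => f x ^ 2) μ)
    (hc : 0 < c) (hfc : (∫ x, f x ^ 2 ∂μ) = c) (n : ℕ) :
    Measurable (fun x => min (Real.log (f x ^ 2 / (2 * c) + 1 / 2)) (n : ℝ)) ∧
    Integrable (fun x => Real.exp (min (Real.log (f x ^ 2 / (2 * c) + 1 / 2)) (n : ℝ))) μ ∧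
    Integrable (fun x => f x ^ 2 * min (Real.log (f x ^ 2 / (2 * c) + 1 / 2)) (n : ℝ)) μ ∧
    (∫ x, Real.exp (min (Real.log (f x ^ 2 / (2 * c) + 1 / 2)) (n : ℝ)) ∂μ) ≤ 1 := by
  set φ : Ω → ℝ := fun x => Real.log (f x ^ 2 / (2 * c) + 1 / 2) with hφ
  have hφm : Measurable φ := by
    apply Measurable.log
    exact ((hfm.pow_const 2).div_const _).add_const _
  have hgm : Measurable (fun x => min (φ x) (n : ℝ)) := hφm.min measurable_const
  have hgb : ∀ x, |min (φ x) (n : ℝ)| ≤ max (n : ℝ) (Real.log 2) := by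
    intro x
    rw [abs_le]
    constructor
    · have h1 := phi_lb f c hc x
      have h2 : (0:ℝ) ≤ n := Nat.cast_nonneg n
      have h3 : (0:ℝ) ≤ Real.log 2 := Real.log_nonneg (by norm_num)
      have h4 := le_max_right (n : ℝ) (Real.log 2)
      rcases min_cases (φ x) (n : ℝ) with ⟨h, _⟩ | ⟨h, _⟩ <;> rw [h] <;> linarith
    · calc min (φ x) (n : ℝ) ≤ (n : ℝ) := min_le_right _ _
        _ ≤ _ := le_max_left _ _
  have hfgint : Integrable (fun x => f x ^ 2 * min (φ x) (n : ℝ)) μ := by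
    apply Integrable.mono' (hf2.mul_const (max (n : ℝ) (Real.log 2)))
      ((hfm.pow_const 2).mul hgm).aestronglyMeasurable
    filter_upwards with x
    rw [Real.norm_eq_abs]; simp only [Pi.mul_apply]; rw [abs_mul, abs_of_nonneg (sq_nonneg (f x))]
    exact mul_le_mul_of_nonneg_left (hgb x) (sq_nonneg (f x))
  have hexpb : ∀ x, Real.exp (min (φ x) (n : ℝ)) ≤ f x ^ 2 / (2 * c) + 1 / 2 := by
    intro x
    calc Real.exp (min (φ x) (n : ℝ)) ≤ Real.exp (φ x) :=
          Real.exp_le_exp.2 (min_le_left _ _)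
      _ = f x ^ 2 / (2 * c) + 1 / 2 := Real.exp_log (phi_pos f c hc x)
  have hbint : Integrable (fun x => f x ^ 2 / (2 * c) + 1 / 2) μ :=
    (hf2.div_const _).add (integrable_const _)
  have hexpint : Integrable (fun x => Real.exp (min (φ x) (n : ℝ))) μ := by
    apply Integrable.mono' hbint (Real.measurable_exp.comp hgm).aestronglyMeasurable
    filter_upwards with x
    simp only [Function.comp_apply, Real.norm_eq_abs, abs_of_pos (Real.exp_pos _)]
    exact hexpb x
  have hexpval : (∫ x, Real.exp (min (φ x) (n : ℝ)) ∂μ) ≤ 1 := by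
    calc (∫ x, Real.exp (min (φ x) (n : ℝ)) ∂μ)
        ≤ ∫ x, (f x ^ 2 / (2 * c) + 1 / 2) ∂μ := integral_mono hexpint hbint hexpb
      _ = 1 := by
          rw [integral_add (hf2.div_const _) (integrable_const _), integral_div, hfc,
            integral_const, probReal_univ, smul_eq_mul]
          field_simp
          ring
  exact ⟨hgm, hexpint, hfgint, hexpval⟩

end Trunc

lemma aux_integrable {Ω : Type*} [MeasurableSpace Ω] (μ : Measure Ω) [IsProbabilityMeasure μ]
    (f : Ω → ℝ) (hfm : Measurable f) (hf2 : Integrable (fun x => f x ^ 2) μ)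
    (c : ℝ) (hc : 0 < c) (hfc : (∫ x, f x ^ 2 ∂μ) = c) (M : ℝ)
    (hbd : ∀ n : ℕ, (∫ x, f x ^ 2 * min (Real.log (f x ^ 2 / (2 * c) + 1 / 2)) (n : ℝ) ∂μ) ≤ M) :
    Integrable (fun x => f x ^ 2 * Real.log (f x ^ 2 / c)) μ := by
  set φ : Ω → ℝ := fun x => Real.log (f x ^ 2 / (2 * c) + 1 / 2) with hφ
  have hφm : Measurable φ := by
    apply Measurable.log
    exact ((hfm.pow_const 2).div_const _).add_const _
  set h : ℕ → Ω → ℝ := fun n x => f x ^ 2 * min (φ x) (n : ℝ) + Real.log 2 * f x ^ 2 with hh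
  have hlog2 : (0:ℝ) ≤ Real.log 2 := Real.log_nonneg (by norm_num)
  have hnn : ∀ n x, 0 ≤ h n x := by
    intro n x
    have h1 := phi_lb f c hc x
    have h2 : (0:ℝ) ≤ n := Nat.cast_nonneg n
    have h3 : -Real.log 2 ≤ min (φ x) (n : ℝ) := le_min (h1) (by linarith)
    simp only [hh]
    nlinarith [sq_nonneg (f x)]
  have hmono : ∀ n m : ℕ, n ≤ m → ∀ x, h n x ≤ h m x := by
    intro n m hnm x
    have : min (φ x) (n : ℝ) ≤ min (φ x) (m : ℝ) :=
      min_le_min le_rfl (Nat.cast_le.2 hnm)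
    simp only [hh]
    nlinarith [sq_nonneg (f x)]
  have hint : ∀ n, Integrable (h n) μ := fun n =>
    ((gn_props μ f c hfm hf2 hc hfc n).2.2.1).add (hf2.const_mul _)
  have hintval : ∀ n, (∫ x, h n x ∂μ) ≤ M + Real.log 2 * c := by
    intro n
    have := hbd n
    rw [hh]
    rw [integral_add ((gn_props μ f c hfm hf2 hc hfc n).2.2.1) (hf2.const_mul _),
      MeasureTheory.integral_const_mul, hfc]
    linarith
  have hmeas : ∀ n, Measurable (fun x => ENNReal.ofReal (h n x)) := by
    intro n
    exact (((hfm.pow_const 2).mul (hφm.min measurable_const)).add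
      ((hfm.pow_const 2).const_mul _)).ennreal_ofReal
  have hlim : ∀ x, ⨆ n : ℕ, ENNReal.ofReal (h n x)
      = ENNReal.ofReal (f x ^ 2 * φ x + Real.log 2 * f x ^ 2) := by
    intro x
    apply le_antisymm
    · apply iSup_le
      intro n
      apply ENNReal.ofReal_le_ofReal
      have : min (φ x) (n : ℝ) ≤ φ x := min_le_left _ _
      simp only [hh]
      nlinarith [sq_nonneg (f x)]
    · obtain ⟨n, hn⟩ := exists_nat_ge (φ x)
      have : h n x = f x ^ 2 * φ x + Real.log 2 * f x ^ 2 := by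
        rw [hh]; simp only [min_eq_left hn]
      calc ENNReal.ofReal (f x ^ 2 * φ x + Real.log 2 * f x ^ 2)
          = ENNReal.ofReal (h n x) := by rw [this]
        _ ≤ ⨆ n : ℕ, ENNReal.ofReal (h n x) := le_iSup (fun n => ENNReal.ofReal (h n x)) n
  have hlintval : ∀ n, (∫⁻ x, ENNReal.ofReal (h n x) ∂μ)
      = ENNReal.ofReal (∫ x, h n x ∂μ) :=
    fun n => (ofReal_integral_eq_lintegral_ofReal (hint n)
      (ae_of_all _ (hnn n))).symm
  have hmc : (∫⁻ x, ENNReal.ofReal (f x ^ 2 * φ x + Real.log 2 * f x ^ 2) ∂μ)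
      = ⨆ n : ℕ, ∫⁻ x, ENNReal.ofReal (h n x) ∂μ := by
    rw [← lintegral_iSup hmeas]
    · exact lintegral_congr fun x => (hlim x).symm
    · intro n m hnm x
      exact ENNReal.ofReal_le_ofReal (hmono n m hnm x)
  have hfin : (∫⁻ x, ENNReal.ofReal (f x ^ 2 * φ x + Real.log 2 * f x ^ 2) ∂μ) ≠ ⊤ := by
    rw [hmc]
    apply ne_top_of_le_ne_top (b := ENNReal.ofReal (M + Real.log 2 * c)) ENNReal.ofReal_ne_top
    apply iSup_le
    intro n
    rw [hlintval n]
    exact ENNReal.ofReal_le_ofReal (hintval n)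
  have hHm : AEStronglyMeasurable (fun x => f x ^ 2 * φ x + Real.log 2 * f x ^ 2) μ :=
    (((hfm.pow_const 2).mul hφm).add ((hfm.pow_const 2).const_mul _)).aestronglyMeasurable
  have hHnn : ∀ x, 0 ≤ f x ^ 2 * φ x + Real.log 2 * f x ^ 2 := by
    intro x
    have h1 := phi_lb f c hc x
    nlinarith [sq_nonneg (f x)]
  have hHint : Integrable (fun x => f x ^ 2 * φ x + Real.log 2 * f x ^ 2) μ :=
    (lintegral_ofReal_ne_top_iff_integrable hHm (ae_of_all _ hHnn)).1 hfin
  -- sandwich f² log(f²/c) between -c and H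
  have hsand : ∀ x, f x ^ 2 * Real.log (f x ^ 2 / c)
      ≤ f x ^ 2 * φ x + Real.log 2 * f x ^ 2 := by
    intro x
    rcases eq_or_lt_of_le (sq_nonneg (f x)) with h0 | h0
    · rw [← h0]; simp
    · have hu : 0 < f x ^ 2 / (2 * c) := by positivity
      have h1 : φ x ≥ Real.log (f x ^ 2 / (2 * c)) := by
        apply Real.log_le_log hu; linarith
      have h2 : Real.log (f x ^ 2 / c) = Real.log (f x ^ 2 / (2 * c)) + Real.log 2 := by
        rw [← Real.log_mul hu.ne' two_ne_zero]
        congr 1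
        field_simp
      nlinarith [h1, h2]
  have hlb : ∀ x, -c ≤ f x ^ 2 * Real.log (f x ^ 2 / c) := by
    intro x
    rcases eq_or_lt_of_le (sq_nonneg (f x)) with h0 | h0
    · rw [← h0]; simp; linarith
    · have hu : 0 < f x ^ 2 / c := by positivity
      have h1 : Real.log (c / f x ^ 2) ≤ c / f x ^ 2 - 1 :=
        Real.log_le_sub_one_of_pos (by positivity)
      have h2 : Real.log (c / f x ^ 2) = -Real.log (f x ^ 2 / c) := by
        rw [Real.log_div hc.ne' h0.ne', Real.log_div h0.ne' hc.ne']
        ring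
      have h3 : Real.log (f x ^ 2 / c) ≥ 1 - c / f x ^ 2 := by linarith
      have h4 : f x ^ 2 * Real.log (f x ^ 2 / c) ≥ f x ^ 2 * (1 - c / f x ^ 2) :=
        mul_le_mul_of_nonneg_left h3 h0.le
      have h5 : f x ^ 2 * (1 - c / f x ^ 2) = f x ^ 2 - c := by
        rw [mul_sub, mul_one, mul_div_assoc', mul_div_cancel_left₀ _ h0.ne']
      nlinarith [h4, h5]
  have habs : Integrable (fun x => c + |f x ^ 2 * φ x + Real.log 2 * f x ^ 2|) μ :=
    (integrable_const c).add hHint.abs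
  apply Integrable.mono' habs
    ((hfm.pow_const 2).mul ((hfm.pow_const 2).div_const c).log).aestronglyMeasurable
  filter_upwards with x
  rw [Real.norm_eq_abs, abs_le]; simp only [Pi.mul_apply]
  constructor
  · have h1 := hlb x
    have h2 := abs_nonneg (f x ^ 2 * φ x + Real.log 2 * f x ^ 2)
    linarith
  · have h1 := hsand x
    have h2 := le_abs_self (f x ^ 2 * φ x + Real.log 2 * f x ^ 2)
    linarith [hc.le]


/-- Duality formula for the entropy functional: for a nonnegative `f` with `E[f²] < ∞`
on a probability space, `E[f² log(f²/E[f²])]` equals the supremum of `E[f² g]` over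
measurable `g` with `E[e^g] ≤ 1`. -/
theorem entropy_duality {Ω : Type*} [MeasurableSpace Ω] (μ : Measure Ω)
    [IsProbabilityMeasure μ] (f : Ω → ℝ) (hf : ∀ x, 0 ≤ f x) (hfm : Measurable f)
    (hf2 : Integrable (fun x => f x ^ 2) μ) :
    ∫ x, f x ^ 2 * Real.log (f x ^ 2 / ∫ y, f y ^ 2 ∂μ) ∂μ
      = sSup {r : ℝ | ∃ g : Ω → ℝ, Measurable g ∧
          Integrable (fun x => Real.exp (g x)) μ ∧
          Integrable (fun x => f x ^ 2 * g x) μ ∧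
          (∫ x, Real.exp (g x) ∂μ) ≤ 1 ∧
          r = ∫ x, f x ^ 2 * g x ∂μ} := by
  set S := {r : ℝ | ∃ g : Ω → ℝ, Measurable g ∧
      Integrable (fun x => Real.exp (g x)) μ ∧
      Integrable (fun x => f x ^ 2 * g x) μ ∧
      (∫ x, Real.exp (g x) ∂μ) ≤ 1 ∧
      r = ∫ x, f x ^ 2 * g x ∂μ} with hS
  set c := ∫ y, f y ^ 2 ∂μ with hcdef
  have hfc : (∫ x, f x ^ 2 ∂μ) = c := rfl
  have hc0 : 0 ≤ c := by
    rw [← hfc]; exact integral_nonneg fun x => sq_nonneg _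
  have hzero : (0:ℝ) ∈ S := by
    refine ⟨fun _ => 0, measurable_const, ?_, ?_, ?_, ?_⟩
    · simpa using integrable_const (1:ℝ)
    · simpa using integrable_const (0:ℝ)
    · simp
    · simp
  rcases eq_or_lt_of_le hc0 with hc | hc
  · -- degenerate case c = 0
    have hae : (fun x => f x ^ 2) =ᵐ[μ] 0 :=
      (integral_eq_zero_iff_of_nonneg (fun x => sq_nonneg _) hf2).1 (hfc.trans hc.symm)
    have hLHS : ∫ x, f x ^ 2 * Real.log (f x ^ 2 / c) ∂μ = 0 := by
      rw [← hc]
      simp [div_zero, Real.log_zero]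
    have hSeq : S = {0} := by
      apply Set.eq_singleton_iff_unique_mem.2
      refine ⟨hzero, ?_⟩
      rintro r ⟨g, hgm, hge, hfg, hg1, rfl⟩
      have : (fun x => f x ^ 2 * g x) =ᵐ[μ] 0 := by
        filter_upwards [hae] with x hx
        simp only [Pi.zero_apply] at hx ⊢
        rw [hx, zero_mul]
      rw [integral_congr_ae this]; simp
    rw [hLHS, hSeq, csSup_singleton]
  · by_cases hL : Integrable (fun x => f x ^ 2 * Real.log (f x ^ 2 / c)) μ
    · have hub : ∀ r ∈ S, r ≤ ∫ x, f x ^ 2 * Real.log (f x ^ 2 / c) ∂μ := by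
        rintro r ⟨g, hgm, hge, hfg, hg1, rfl⟩
        exact elem_le μ f g c hc hf2 hfc hL hge hfg hg1
      have hbdd : BddAbove S := ⟨_, hub⟩
      apply le_antisymm
      · apply le_of_forall_sub_le
        intro δ hδ
        set ε : ℝ := 1 - Real.exp (-δ / c) with hε
        have hεexp : Real.exp (-δ / c) < 1 := by
          rw [Real.exp_lt_one_iff]
          exact div_neg_of_neg_of_pos (by linarith) hc
        have hε0 : 0 < ε := by simp only [hε]; linarith
        have hε1 : ε < 1 := by
          have := Real.exp_pos (-δ / c)
          simp only [hε]; linarith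
        obtain ⟨g, hgm, hge, hfg, hg1, hbound⟩ :=
          eps_g μ f hfm hf2 c hc hfc hL ε hε0 hε1
        have hmem : (∫ x, f x ^ 2 * g x ∂μ) ∈ S := ⟨g, hgm, hge, hfg, hg1, rfl⟩
        have hle := le_csSup hbdd hmem
        have hlogε : Real.log (1 - ε) = -δ / c := by
          rw [hε]
          simp [Real.log_exp]
        rw [hlogε] at hbound
        have : -δ / c * c = -δ := by field_simp
        linarith [hbound, hle]
      · exact csSup_le ⟨0, hzero⟩ hub
    · have hnb : ¬ BddAbove S := by
        rintro ⟨M, hM⟩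
        apply hL
        apply aux_integrable μ f hfm hf2 c hc hfc M
        intro n
        obtain ⟨hgm, hge, hfg, hg1⟩ := gn_props μ f c hfm hf2 hc hfc n
        exact hM ⟨_, hgm, hge, hfg, hg1, rfl⟩
      rw [csSup_of_not_bddAbove hnb, Real.sSup_empty]
      exact integral_undef hL
end

section
/- Let V : H_a → H_B ⊗ H_C be a linear map between finite-dimensional complex Hilbert spaces, W a unitary on H_a, and ψ ∈ H_a. If there exists a unitary W_B on H_B with ‖(W_B ⊗ I_C) V ψ − V W ψ‖ ≤ ε₁, then the decoupling condition holds: ‖tr_B(VWψ (VWψ)†) − tr_B(Vψ (Vψ)†)‖₁ ≤ √(2(‖Vψ‖² + ‖VWψ‖²)) · ε₁, where tr_B denotes the partial trace over H_B and ‖·‖₁ is the trace norm. -/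
open scoped ComplexOrder Matrix

/-- The Euclidean norm of a vector. -/
noncomputable def vecNorm {ι : Type*} [Fintype ι] (x : ι → ℂ) : ℝ :=
  Real.sqrt (∑ i, ‖x i‖ ^ 2)

/-- The (unnormalized) rank-one operator `|x⟩⟨x|`, as a matrix. -/
noncomputable def outerProd {ι : Type*} (x : ι → ℂ) : Matrix ι ι ℂ :=
  Matrix.of fun i j => x i * (starRingEnd ℂ) (x j)

/-- The partial trace over the first (`B`) factor of an operator on `H_B ⊗ H_C`. -/
noncomputable def ptraceB {b c : Type*} [Fintype b]
    (M : Matrix (b × c) (b × c) ℂ) : Matrix c c ℂ :=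
  Matrix.of fun i j => ∑ k : b, M (k, i) (k, j)

/-- The trace norm `‖A‖₁ = tr √(AᴴA)` (sum of singular values). -/
noncomputable def traceNorm {n : Type*} [Fintype n] [DecidableEq n]
    (A : Matrix n n ℂ) : ℝ :=
  (((Matrix.posSemidef_conjTranspose_mul_self A).1.eigenvectorUnitary : Matrix n n ℂ) *
      Matrix.diagonal ((fun r : ℝ => (r : ℂ)) ∘ (√·) ∘ (Matrix.posSemidef_conjTranspose_mul_self A).1.eigenvalues) *
      (star (Matrix.posSemidef_conjTranspose_mul_self A).1.eigenvectorUnitary : Matrix n n ℂ)).trace.re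

open Kronecker

lemma vecNorm_eq_norm {ι : Type*} [Fintype ι] (x : ι → ℂ) :
    vecNorm x = ‖(WithLp.equiv 2 (ι → ℂ)).symm x‖ := by
  rw [EuclideanSpace.norm_eq]; rfl

lemma vecNorm_nonneg {ι : Type*} [Fintype ι] (x : ι → ℂ) : 0 ≤ vecNorm x :=
  Real.sqrt_nonneg _

lemma vecNorm_sub_comm {ι : Type*} [Fintype ι] (x y : ι → ℂ) :
    vecNorm (x - y) = vecNorm (y - x) := by
  have : ∀ z : ι → ℂ, vecNorm z = vecNorm (-z) := by
    intro z; unfold vecNorm; simp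
  rw [this, neg_sub]

lemma cauchy_schwarz {ι : Type*} [Fintype ι] (x y : ι → ℂ) :
    ‖star x ⬝ᵥ y‖ ≤ vecNorm x * vecNorm y := by
  have := norm_inner_le_norm (𝕜 := ℂ) ((WithLp.equiv 2 (ι → ℂ)).symm x)
    ((WithLp.equiv 2 (ι → ℂ)).symm y)
  rw [vecNorm_eq_norm, vecNorm_eq_norm]
  refine le_trans (le_of_eq ?_) this
  rw [PiLp.inner_apply]
  simp [dotProduct, RCLike.inner_apply, mul_comm]

lemma star_dot_mulVec_self {n : Type*} [Fintype n] [DecidableEq n] (M : Matrix n n ℂ)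
    (hM : M ∈ unitary (Matrix n n ℂ)) (x y : n → ℂ) :
    star (M.mulVec x) ⬝ᵥ (M.mulVec y) = star x ⬝ᵥ y := by
  rw [Matrix.star_mulVec, Matrix.dotProduct_mulVec, Matrix.vecMul_vecMul,
    show Mᴴ * M = 1 from (Unitary.mem_iff.mp hM).1, Matrix.vecMul_one]

lemma vecNorm_sq_eq {ι : Type*} [Fintype ι] (x : ι → ℂ) :
    (vecNorm x) ^ 2 = (star x ⬝ᵥ x).re := by
  have h : (star x ⬝ᵥ x).re = ∑ i, ‖x i‖ ^ 2 := by
    simp [dotProduct, Complex.re_sum, ← Complex.normSq_eq_norm_sq, Complex.normSq_apply,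
      Complex.mul_re]
  rw [h, vecNorm, Real.sq_sqrt]
  positivity

lemma vecNorm_mulVec_unitary {n : Type*} [Fintype n] [DecidableEq n] (M : Matrix n n ℂ)
    (hM : M ∈ unitary (Matrix n n ℂ)) (x : n → ℂ) :
    vecNorm (M.mulVec x) = vecNorm x := by
  have h := congrArg Complex.re (star_dot_mulVec_self M hM x x)
  rw [← vecNorm_sq_eq, ← vecNorm_sq_eq] at h
  nlinarith [vecNorm_nonneg (M.mulVec x), vecNorm_nonneg x, sq_nonneg (vecNorm (M.mulVec x) - vecNorm x), sq_nonneg (vecNorm (M.mulVec x) + vecNorm x)]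

open Kronecker in
lemma conjTranspose_kron {b c : Type*} (A : Matrix b b ℂ) (B : Matrix c c ℂ) :
    (A ⊗ₖ B)ᴴ = Aᴴ ⊗ₖ Bᴴ := by
  ext ⟨i, j⟩ ⟨k, l⟩
  simp [Matrix.conjTranspose_apply, Matrix.kroneckerMap_apply, mul_comm]

open Kronecker in
lemma kron_unitary {b c : Type*} [Fintype b] [DecidableEq b] [Fintype c] [DecidableEq c]
    (A : Matrix b b ℂ) (B : Matrix c c ℂ)
    (hA : A ∈ unitary (Matrix b b ℂ)) (hB : B ∈ unitary (Matrix c c ℂ)) :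
    A ⊗ₖ B ∈ unitary (Matrix (b × c) (b × c) ℂ) := by
  rw [Unitary.mem_iff]
  constructor
  · show (A ⊗ₖ B)ᴴ * (A ⊗ₖ B) = 1
    rw [conjTranspose_kron, ← Matrix.mul_kronecker_mul,
      show Aᴴ * A = 1 from (Unitary.mem_iff.mp hA).1,
      show Bᴴ * B = 1 from (Unitary.mem_iff.mp hB).1, Matrix.one_kronecker_one]
  · show (A ⊗ₖ B) * (A ⊗ₖ B)ᴴ = 1
    rw [conjTranspose_kron, ← Matrix.mul_kronecker_mul,
      show A * Aᴴ = 1 from (Unitary.mem_iff.mp hA).2,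
      show B * Bᴴ = 1 from (Unitary.mem_iff.mp hB).2, Matrix.one_kronecker_one]

lemma ptraceB_sub {b c : Type*} [Fintype b] (M N : Matrix (b × c) (b × c) ℂ) :
    ptraceB (M - N) = ptraceB M - ptraceB N := by
  ext i j; simp [ptraceB, Finset.sum_sub_distrib]

lemma ptraceB_outer_hermitian {b c : Type*} [Fintype b] (x : b × c → ℂ) :
    (ptraceB (outerProd x)).IsHermitian := by
  ext i j
  simp only [Matrix.conjTranspose_apply, ptraceB, outerProd, Matrix.of_apply, star_sum]
  congr 1; ext k; simp [mul_comm]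

open Kronecker in
lemma trace_ptraceB_mul {b c : Type*} [Fintype b] [Fintype c] [DecidableEq b]
    (M : Matrix (b × c) (b × c) ℂ) (Y : Matrix c c ℂ) :
    ((ptraceB M) * Y).trace = (M * ((1 : Matrix b b ℂ) ⊗ₖ Y)).trace := by
  have lhs : ((ptraceB M) * Y).trace = ∑ i : c, ∑ j : c, ∑ k : b, M (k, i) (k, j) * Y j i := by
    simp only [Matrix.trace, Matrix.diag, Matrix.mul_apply, ptraceB, Matrix.of_apply,
      Finset.sum_mul]
  have rhs : (M * ((1 : Matrix b b ℂ) ⊗ₖ Y)).trace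
      = ∑ k : b, ∑ i : c, ∑ j : c, M (k, i) (k, j) * Y j i := by
    simp only [Matrix.trace, Matrix.diag, Matrix.mul_apply, Matrix.kroneckerMap_apply,
      Matrix.one_apply]
    rw [Fintype.sum_prod_type]
    refine Finset.sum_congr rfl fun k _ => Finset.sum_congr rfl fun i _ => ?_
    rw [Fintype.sum_prod_type, Finset.sum_comm]
    simp [Finset.mul_sum, mul_ite]
  rw [lhs, rhs]
  rw [show (∑ i : c, ∑ j : c, ∑ k : b, M (k, i) (k, j) * Y j i)
      = ∑ i : c, ∑ k : b, ∑ j : c, M (k, i) (k, j) * Y j i from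
    Finset.sum_congr rfl fun i _ => Finset.sum_comm]
  exact Finset.sum_comm

lemma trace_outer_mul {ι : Type*} [Fintype ι] (x : ι → ℂ) (Z : Matrix ι ι ℂ) :
    (outerProd x * Z).trace = star x ⬝ᵥ (Z.mulVec x) := by
  simp only [Matrix.trace, Matrix.diag, Matrix.mul_apply, outerProd, Matrix.of_apply,
    dotProduct, Matrix.mulVec, Pi.star_apply]
  rw [Finset.sum_comm]
  congr 1; ext j
  rw [Finset.mul_sum]
  congr 1; ext i
  rw [show star (x j) = (starRingEnd ℂ) (x j) from rfl]
  ring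

lemma traceNorm_dual {n : Type*} [Fintype n] [DecidableEq n]
    (A : Matrix n n ℂ) (hA : A.IsHermitian) :
    ∃ Y ∈ unitary (Matrix n n ℂ), traceNorm A = ((A * Y).trace).re := by
  set U : Matrix n n ℂ := (hA.eigenvectorUnitary : Matrix n n ℂ) with hU
  have hUu : Uᴴ * U = 1 := by
    simpa [Matrix.star_eq_conjTranspose] using
      (Unitary.mem_iff.mp hA.eigenvectorUnitary.2).1
  have hUu' : U * Uᴴ = 1 := by
    simpa [Matrix.star_eq_conjTranspose] using
      (Unitary.mem_iff.mp hA.eigenvectorUnitary.2).2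
  set lam := hA.eigenvalues with hlam
  have hspec : A = U * Matrix.diagonal (Complex.ofReal ∘ lam) * Uᴴ := by
    have := hA.spectral_theorem; rw [Unitary.conjStarAlgAut_apply] at this; exact this
  set sgn : n → ℝ := fun i => if 0 ≤ lam i then 1 else -1 with hsgn
  set Y : Matrix n n ℂ := U * Matrix.diagonal (Complex.ofReal ∘ sgn) * Uᴴ with hY
  have hdiagH : (Matrix.diagonal (Complex.ofReal ∘ sgn))ᴴ
      = Matrix.diagonal (Complex.ofReal ∘ sgn) := by
    ext i j
    simp only [Matrix.conjTranspose_apply]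
    by_cases hij : i = j
    · subst hij
      simp [Matrix.diagonal_apply_eq, Complex.conj_ofReal]
    · simp [Matrix.diagonal_apply, hij, Ne.symm hij]
  have hYH : Yᴴ = Y := by
    rw [hY]
    simp only [Matrix.conjTranspose_mul, Matrix.conjTranspose_conjTranspose, hdiagH, mul_assoc]
  have hYu : Y ∈ unitary (Matrix n n ℂ) := by
    rw [Unitary.mem_iff]
    have key : Y * Y = 1 := by
      rw [hY]
      calc U * Matrix.diagonal (Complex.ofReal ∘ sgn) * Uᴴ *
            (U * Matrix.diagonal (Complex.ofReal ∘ sgn) * Uᴴ)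
          = U * (Matrix.diagonal (Complex.ofReal ∘ sgn) * ((Uᴴ * U) *
              Matrix.diagonal (Complex.ofReal ∘ sgn))) * Uᴴ := by simp only [mul_assoc]
        _ = 1 := by
            rw [hUu, one_mul, Matrix.diagonal_mul_diagonal]
            have : (fun i => (Complex.ofReal ∘ sgn) i * (Complex.ofReal ∘ sgn) i)
                = fun _ => (1 : ℂ) := by
              ext i
              by_cases h : 0 ≤ lam i <;> simp [hsgn, h]
            rw [this, Matrix.diagonal_one, mul_one, hUu']
    constructor
    · rw [Matrix.star_eq_conjTranspose, hYH]; exact key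
    · rw [Matrix.star_eq_conjTranspose, hYH]; exact key
  refine ⟨Y, hYu, ?_⟩
  set S : Matrix n n ℂ := U * Matrix.diagonal (Complex.ofReal ∘ fun i => |lam i|) * Uᴴ with hS
  have hSpsd : S.PosSemidef := by
    refine Matrix.PosSemidef.mul_mul_conjTranspose_same ?_ U
    refine Matrix.posSemidef_diagonal_iff.mpr fun i => ?_
    simp only [Function.comp_apply]
    exact_mod_cast Complex.zero_le_real.mpr (abs_nonneg _)
  have hSsq : S ^ 2 = Aᴴ * A := by
    rw [hA.eq, hS, hspec, pow_two]
    calc U * Matrix.diagonal (Complex.ofReal ∘ fun i => |lam i|) * Uᴴ *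
          (U * Matrix.diagonal (Complex.ofReal ∘ fun i => |lam i|) * Uᴴ)
        = U * (Matrix.diagonal (Complex.ofReal ∘ fun i => |lam i|) * ((Uᴴ * U) *
            Matrix.diagonal (Complex.ofReal ∘ fun i => |lam i|))) * Uᴴ := by simp only [mul_assoc]
      _ = U * (Matrix.diagonal (Complex.ofReal ∘ lam) * ((Uᴴ * U) *
            Matrix.diagonal (Complex.ofReal ∘ lam))) * Uᴴ := by
          rw [hUu, one_mul, one_mul, Matrix.diagonal_mul_diagonal, Matrix.diagonal_mul_diagonal]
          congr 1
          congr 1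
          ext i j
          by_cases hij : i = j
          · subst hij
            simp only [Matrix.diagonal_apply_eq, Function.comp_apply, ← Complex.ofReal_mul,
              abs_mul_abs_self]
          · simp [Matrix.diagonal_apply, hij]
      _ = U * Matrix.diagonal (Complex.ofReal ∘ lam) * Uᴴ *
          (U * Matrix.diagonal (Complex.ofReal ∘ lam) * Uᴴ) := by simp only [mul_assoc]
  have hsqrt : ((Matrix.posSemidef_conjTranspose_mul_self A).1.eigenvectorUnitary : Matrix n n ℂ) *
      Matrix.diagonal ((fun r : ℝ => (r : ℂ)) ∘ (√·) ∘ (Matrix.posSemidef_conjTranspose_mul_self A).1.eigenvalues) *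
      (star (Matrix.posSemidef_conjTranspose_mul_self A).1.eigenvectorUnitary : Matrix n n ℂ) = S := by
    have hB := Matrix.posSemidef_conjTranspose_mul_self A
    have h1 : hB.1.cfc Real.sqrt = S := by
      open scoped MatrixOrder in
      rw [← hB.1.cfc_eq, ← cfcₙ_eq_cfc (hf := Real.continuous_sqrt.continuousOn) (hf0 := Real.sqrt_zero), ← CFC.sqrt_eq_real_sqrt _ hB.nonneg,
        CFC.sqrt_eq_iff _ _ hB.nonneg hSpsd.nonneg, ← pow_two, hSsq]
    rw [Matrix.IsHermitian.cfc, Unitary.conjStarAlgAut_apply] at h1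
    exact h1
  have hAY : A * Y = S := by
    rw [hspec, hY, hS]
    calc U * Matrix.diagonal (Complex.ofReal ∘ lam) * Uᴴ *
          (U * Matrix.diagonal (Complex.ofReal ∘ sgn) * Uᴴ)
        = U * (Matrix.diagonal (Complex.ofReal ∘ lam) * ((Uᴴ * U) *
            Matrix.diagonal (Complex.ofReal ∘ sgn))) * Uᴴ := by simp only [mul_assoc]
      _ = U * Matrix.diagonal (Complex.ofReal ∘ fun i => |lam i|) * Uᴴ := by
          rw [hUu, one_mul, Matrix.diagonal_mul_diagonal]
          congr 1
          congr 1
          ext i j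
          by_cases hij : i = j
          · subst hij
            rcases le_or_gt 0 (lam i) with h | h
            · simp [Matrix.diagonal_apply_eq, hsgn, h, abs_of_nonneg h]
            · simp [Matrix.diagonal_apply_eq, hsgn, not_le.mpr h, abs_of_neg h]
          · simp [Matrix.diagonal_apply, hij]
  rw [traceNorm, hsqrt, hAY]

lemma dot_conj_invariant {n : Type*} [Fintype n] [DecidableEq n]
    (K Z : Matrix n n ℂ) (hK : K ∈ unitary (Matrix n n ℂ)) (hcomm : Z * K = K * Z)
    (φ : n → ℂ) :
    star φ ⬝ᵥ Z.mulVec φ = star (K.mulVec φ) ⬝ᵥ Z.mulVec (K.mulVec φ) := by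
  rw [Matrix.mulVec_mulVec, hcomm, ← Matrix.mulVec_mulVec]
  exact (star_dot_mulVec_self K hK φ (Z.mulVec φ)).symm

/-- The forward direction of the decoupling theorem: if an interior unitary `W` can be
reconstructed by a unitary `W_B ⊗ I_C` up to error `ε₁` on the encoded state `Vψ`, then
the reduced states on `C` of the encodings of `Wψ` and `ψ` are close in trace norm:
`‖tr_B(VWψ (VWψ)†) − tr_B(Vψ (Vψ)†)‖₁ ≤ √(2(‖Vψ‖² + ‖VWψ‖²)) · ε₁`. -/
theorem decoupling_of_reconstruction {a b c : Type*}
    [Fintype a] [DecidableEq a] [Fintype b] [DecidableEq b] [Fintype c] [DecidableEq c]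
    (V : Matrix (b × c) a ℂ) (W : Matrix a a ℂ) (hW : W ∈ unitary (Matrix a a ℂ))
    (ψ : a → ℂ) (ε₁ : ℝ)
    (WB : Matrix b b ℂ) (hWB : WB ∈ unitary (Matrix b b ℂ))
    (hrec : vecNorm
        ((Matrix.kroneckerMap (· * ·) WB (1 : Matrix c c ℂ)).mulVec (V.mulVec ψ)
          - V.mulVec (W.mulVec ψ)) ≤ ε₁) :
    traceNorm (ptraceB (outerProd (V.mulVec (W.mulVec ψ)))
        - ptraceB (outerProd (V.mulVec ψ)))
      ≤ Real.sqrt (2 * (vecNorm (V.mulVec ψ) ^ 2 + vecNorm (V.mulVec (W.mulVec ψ)) ^ 2))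
          * ε₁ := by
  have h1u : (1 : Matrix c c ℂ) ∈ unitary (Matrix c c ℂ) := by
    rw [Unitary.mem_iff]; simp
  have h1bu : (1 : Matrix b b ℂ) ∈ unitary (Matrix b b ℂ) := by
    rw [Unitary.mem_iff]; simp
  set φ := V.mulVec ψ with hφ
  set v := V.mulVec (W.mulVec ψ) with hv
  set K : Matrix (b × c) (b × c) ℂ := WB ⊗ₖ (1 : Matrix c c ℂ) with hK
  have hKu : K ∈ unitary (Matrix (b × c) (b × c) ℂ) := kron_unitary _ _ hWB h1u
  set u := K.mulVec φ with hu
  have hAH : (ptraceB (outerProd v) - ptraceB (outerProd φ)).IsHermitian :=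
    (ptraceB_outer_hermitian v).sub (ptraceB_outer_hermitian φ)
  obtain ⟨Y, hYu, hTN⟩ := traceNorm_dual _ hAH
  set Z : Matrix (b × c) (b × c) ℂ := (1 : Matrix b b ℂ) ⊗ₖ Y with hZ
  have hZu : Z ∈ unitary (Matrix (b × c) (b × c) ℂ) := kron_unitary _ _ h1bu hYu
  -- trace identity
  have htr : ((ptraceB (outerProd v) - ptraceB (outerProd φ)) * Y).trace
      = star v ⬝ᵥ Z.mulVec v - star u ⬝ᵥ Z.mulVec u := by
    have hcomm : Z * K = K * Z := by
      rw [hZ, hK, ← Matrix.mul_kronecker_mul, ← Matrix.mul_kronecker_mul]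
      simp
    have hswap : star φ ⬝ᵥ Z.mulVec φ = star u ⬝ᵥ Z.mulVec u := by
      rw [hu]
      exact dot_conj_invariant K Z hKu hcomm φ
    rw [Matrix.sub_mul, Matrix.trace_sub, trace_ptraceB_mul, trace_ptraceB_mul,
      trace_outer_mul, trace_outer_mul, ← hZ, hswap]
  -- bilinear expansion
  have hexp : star v ⬝ᵥ Z.mulVec v - star u ⬝ᵥ Z.mulVec u
      = star (v - u) ⬝ᵥ Z.mulVec v + star u ⬝ᵥ Z.mulVec (v - u) := by
    rw [star_sub, sub_dotProduct, Matrix.mulVec_sub, dotProduct_sub]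
    ring
  -- norm bound
  have hbound : ((star v ⬝ᵥ Z.mulVec v - star u ⬝ᵥ Z.mulVec u)).re
      ≤ vecNorm (v - u) * (vecNorm v + vecNorm φ) := by
    rw [hexp]
    calc (star (v - u) ⬝ᵥ Z.mulVec v + star u ⬝ᵥ Z.mulVec (v - u)).re
        ≤ ‖star (v - u) ⬝ᵥ Z.mulVec v + star u ⬝ᵥ Z.mulVec (v - u)‖ :=
          Complex.re_le_norm _
      _ ≤ ‖star (v - u) ⬝ᵥ Z.mulVec v‖
            + ‖star u ⬝ᵥ Z.mulVec (v - u)‖ := norm_add_le _ _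
      _ ≤ vecNorm (v - u) * vecNorm (Z.mulVec v) + vecNorm u * vecNorm (Z.mulVec (v - u)) := by
          gcongr <;> [exact cauchy_schwarz _ _; exact cauchy_schwarz _ _]
      _ = vecNorm (v - u) * (vecNorm v + vecNorm φ) := by
          rw [vecNorm_mulVec_unitary Z hZu, vecNorm_mulVec_unitary Z hZu,
            hu, vecNorm_mulVec_unitary K hKu]
          ring
  have hεv : vecNorm (v - u) ≤ ε₁ := by
    rw [vecNorm_sub_comm]
    exact hrec
  have hε0 : (0 : ℝ) ≤ ε₁ := le_trans (vecNorm_nonneg _) hrec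
  have hsum : vecNorm v + vecNorm φ
      ≤ Real.sqrt (2 * (vecNorm φ ^ 2 + vecNorm v ^ 2)) := by
    have h2 : (vecNorm v + vecNorm φ) ^ 2 ≤ 2 * (vecNorm φ ^ 2 + vecNorm v ^ 2) := by
      nlinarith [sq_nonneg (vecNorm v - vecNorm φ)]
    calc vecNorm v + vecNorm φ = Real.sqrt ((vecNorm v + vecNorm φ) ^ 2) :=
          (Real.sqrt_sq (add_nonneg (vecNorm_nonneg _) (vecNorm_nonneg _))).symm
      _ ≤ _ := Real.sqrt_le_sqrt h2
  calc traceNorm (ptraceB (outerProd v) - ptraceB (outerProd φ))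
      = ((star v ⬝ᵥ Z.mulVec v - star u ⬝ᵥ Z.mulVec u)).re := by rw [hTN, htr]
    _ ≤ vecNorm (v - u) * (vecNorm v + vecNorm φ) := hbound
    _ ≤ ε₁ * Real.sqrt (2 * (vecNorm φ ^ 2 + vecNorm v ^ 2)) := by
        apply mul_le_mul hεv hsum (add_nonneg (vecNorm_nonneg _) (vecNorm_nonneg _)) hε0
    _ = Real.sqrt (2 * (vecNorm φ ^ 2 + vecNorm v ^ 2)) * ε₁ := mul_comm _ _
end
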